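/- arXiv:1505.00459 — 4 statements merged into one kernel-verified Lean document; each statement's English description precedes it below -/
import Mathlib

section
/- Let ‖·‖ be a URTC-norm on ℝ², let d > 0, and let φ : ℝ² → ℝ² be a map that preserves distance d (i.e., ‖x − y‖ = d implies ‖φ(x) − φ(y)‖ = d). If b₀, b₁, b₂ ∈ ℝ² are in regular d-position, then φ(b₁ + b₂ − b₀) = φ(b₁) + φ(b₂) − φ(b₀). -/
/-- `N` is a norm on `ℝ²`. -/
structure IsNorm (N : ℝ × ℝ → ℝ) : Prop where
  add_le : ∀ x y : ℝ × ℝ, N (x + y) ≤ N x + N y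
  smul_eq : ∀ (c : ℝ) (x : ℝ × ℝ), N (c • x) = |c| * N x
  eq_zero_of : ∀ x : ℝ × ℝ, N x = 0 → x = 0

/-- `N` is a URTC-norm: for every `a b` at `N`-distance `1`, there are exactly two
points `x` with `N (a - x) = 1` and `N (b - x) = 1`. -/
def IsURTC (N : ℝ × ℝ → ℝ) : Prop :=
  ∀ a b : ℝ × ℝ, N (a - b) = 1 →
    {x : ℝ × ℝ | N (a - x) = 1 ∧ N (b - x) = 1}.encard = 2

namespace URTCAux

variable {N : ℝ × ℝ → ℝ}

theorem nzero (hN : IsNorm N) : N 0 = 0 := by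
  have h := hN.smul_eq 0 0
  simpa using h

theorem nneg (hN : IsNorm N) (x : ℝ × ℝ) : N (-x) = N x := by
  have h := hN.smul_eq (-1) x
  simpa using h

theorem nnonneg (hN : IsNorm N) (x : ℝ × ℝ) : 0 ≤ N x := by
  have h := hN.add_le x (-x)
  have h0 : x + -x = 0 := by abel
  rw [h0, nzero hN, nneg hN] at h
  linarith

theorem npos (hN : IsNorm N) {x : ℝ × ℝ} (hx : x ≠ 0) : 0 < N x := by
  rcases (nnonneg hN x).lt_or_eq with h | h
  · exact h
  · exact absurd (hN.eq_zero_of x h.symm) hx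

theorem nsub_comm (hN : IsNorm N) (x y : ℝ × ℝ) : N (x - y) = N (y - x) := by
  rw [show x - y = -(y - x) by abel, nneg hN]

theorem ncont (hN : IsNorm N) : Continuous N := by
  have key : ∀ x y : ℝ × ℝ, N x - N y ≤ N (x - y) := by
    intro x y
    have h := hN.add_le (x - y) y
    have h0 : x - y + y = x := by abel
    rw [h0] at h
    linarith
  have bound : ∀ z : ℝ × ℝ, N z ≤ (N (1, 0) + N (0, 1)) * ‖z‖ := by
    intro z
    have hz : z = z.1 • ((1 : ℝ), (0 : ℝ)) + z.2 • ((0 : ℝ), (1 : ℝ)) := by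
      simp [Prod.ext_iff]
    have h1 := hN.add_le (z.1 • ((1 : ℝ), (0 : ℝ))) (z.2 • ((0 : ℝ), (1 : ℝ)))
    rw [← hz, hN.smul_eq, hN.smul_eq] at h1
    have h2 : |z.1| ≤ ‖z‖ := by simpa [Real.norm_eq_abs] using norm_fst_le z
    have h3 : |z.2| ≤ ‖z‖ := by simpa [Real.norm_eq_abs] using norm_snd_le z
    have h4 := nnonneg hN ((1 : ℝ), (0 : ℝ))
    have h5 := nnonneg hN ((0 : ℝ), (1 : ℝ))
    have h6 := abs_nonneg z.1
    have h7 := abs_nonneg z.2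
    nlinarith
  rw [Metric.continuous_iff]
  intro x ε hε
  set C := N (1, 0) + N (0, 1) with hC
  have hC0 : 0 ≤ C := by
    have h4 := nnonneg hN ((1 : ℝ), (0 : ℝ))
    have h5 := nnonneg hN ((0 : ℝ), (1 : ℝ))
    rw [hC]; linarith
  have hCpos : 0 < C + 1 := by linarith
  refine ⟨ε / (C + 1), by positivity, fun y hy => ?_⟩
  have h1 : N y - N x ≤ N (y - x) := key y x
  have h2 : N x - N y ≤ N (y - x) := by rw [nsub_comm hN]; exact key x y
  have h3 : N (y - x) ≤ C * ‖y - x‖ := bound _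
  have h4 : ‖y - x‖ = dist y x := (dist_eq_norm y x).symm
  have h5 : (0 : ℝ) ≤ dist y x := dist_nonneg
  have h6 : (C + 1) * dist y x < (C + 1) * (ε / (C + 1)) := by
    exact mul_lt_mul_of_pos_left hy hCpos
  have h7 : (C + 1) * (ε / (C + 1)) = ε := mul_div_cancel₀ ε hCpos.ne'
  rw [Real.dist_eq, abs_lt]
  constructor <;> nlinarith

theorem nlower (hN : IsNorm N) : ∃ m : ℝ, 0 < m ∧ ∀ z : ℝ × ℝ, m * ‖z‖ ≤ N z := by
  have hne : (Metric.sphere (0 : ℝ × ℝ) 1).Nonempty := by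
    refine ⟨((1 : ℝ), (0 : ℝ)), ?_⟩
    rw [mem_sphere_zero_iff_norm, Prod.norm_def]
    simp
  obtain ⟨z₀, hz₀mem, hmin⟩ :=
    (isCompact_sphere (0 : ℝ × ℝ) 1).exists_isMinOn hne (ncont hN).continuousOn
  have hz₀ : ‖z₀‖ = 1 := mem_sphere_zero_iff_norm.mp hz₀mem
  have hz₀ne : z₀ ≠ 0 := by
    intro h
    rw [h] at hz₀
    simp at hz₀
  refine ⟨N z₀, npos hN hz₀ne, fun z => ?_⟩
  rcases eq_or_ne z 0 with rfl | hz
  · simp [nzero hN]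
  · have h1 : ‖z‖⁻¹ • z ∈ Metric.sphere (0 : ℝ × ℝ) 1 := by
      rw [mem_sphere_zero_iff_norm, norm_smul, norm_inv, norm_norm,
        inv_mul_cancel₀ (norm_ne_zero_iff.mpr hz)]
    have h2 : N z₀ ≤ N (‖z‖⁻¹ • z) := isMinOn_iff.mp hmin _ h1
    have h3 : N (‖z‖⁻¹ • z) = ‖z‖⁻¹ * N z := by
      rw [hN.smul_eq, abs_of_nonneg (by positivity)]
    have h4 : 0 < ‖z‖ := norm_pos_iff.mpr hz
    rw [h3] at h2
    calc N z₀ * ‖z‖ ≤ (‖z‖⁻¹ * N z) * ‖z‖ := by nlinarith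
      _ = N z := by field_simp

theorem twoset (hN : IsNorm N) (hU : IsURTC N) {d : ℝ} (hd : 0 < d) {p q : ℝ × ℝ}
    (hpq : N (p - q) = d) :
    {x : ℝ × ℝ | N (p - x) = d ∧ N (q - x) = d}.encard = 2 := by
  have hscale : ∀ x : ℝ × ℝ, N (d⁻¹ • x) = d⁻¹ * N x := fun x => by
    rw [hN.smul_eq, abs_of_pos (inv_pos.mpr hd)]
  have h1 : N (d⁻¹ • p - d⁻¹ • q) = 1 := by
    rw [← smul_sub, hscale, hpq, inv_mul_cancel₀ hd.ne']
  have h2 := hU _ _ h1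
  have himg : {x : ℝ × ℝ | N (p - x) = d ∧ N (q - x) = d}
      = (fun y : ℝ × ℝ => d • y) ''
        {x : ℝ × ℝ | N (d⁻¹ • p - x) = 1 ∧ N (d⁻¹ • q - x) = 1} := by
    ext x
    simp only [Set.mem_setOf_eq, Set.mem_image]
    constructor
    · rintro ⟨hx1, hx2⟩
      refine ⟨d⁻¹ • x, ⟨?_, ?_⟩, smul_inv_smul₀ hd.ne' x⟩
      · rw [← smul_sub, hscale, hx1, inv_mul_cancel₀ hd.ne']
      · rw [← smul_sub, hscale, hx2, inv_mul_cancel₀ hd.ne']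
    · rintro ⟨y, ⟨hy1, hy2⟩, rfl⟩
      constructor
      · have h : p - d • y = d • (d⁻¹ • p - y) := by
          rw [smul_sub, smul_inv_smul₀ hd.ne']
        rw [h, hN.smul_eq, abs_of_pos hd, hy1, mul_one]
      · have h : q - d • y = d • (d⁻¹ • q - y) := by
          rw [smul_sub, smul_inv_smul₀ hd.ne']
        rw [h, hN.smul_eq, abs_of_pos hd, hy2, mul_one]
  rw [himg, Function.Injective.encard_image (smul_right_injective _ hd.ne'), h2]

theorem pair_eq {α : Type*} {S : Set α} {x y : α} (hS : S.encard = 2) (hx : x ∈ S)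
    (hy : y ∈ S) (hxy : x ≠ y) : S = {x, y} := by
  refine (Set.Finite.eq_of_subset_of_encard_le (Set.toFinite _) ?_ ?_).symm
  · exact Set.insert_subset_iff.mpr ⟨hx, Set.singleton_subset_iff.mpr hy⟩
  · rw [hS, Set.encard_pair hxy]

theorem not_three {α : Type*} {S : Set α} {x y z : α} (hS : S.encard = 2) (hx : x ∈ S)
    (hy : y ∈ S) (hz : z ∈ S) (hxy : x ≠ y) (hxz : x ≠ z) (hyz : y ≠ z) : False := by
  have h := pair_eq hS hx hy hxy
  rw [h] at hz
  rcases hz with rfl | rfl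
  · exact hxz rfl
  · exact hyz rfl

end URTCAux

namespace URTCAux

variable {N : ℝ × ℝ → ℝ}

theorem lemE (hN : IsNorm N) (hU : IsURTC N) {d : ℝ} (hd : 0 < d) {a b : ℝ × ℝ}
    (ha : N a = d) (hb : N b = d) (hab : N (a - b) = d) : N (a + b) ≠ d := by
  intro hs
  have h0 : N (a - 0) = d := by simpa using ha
  have h2 := twoset hN hU hd (p := a) (q := 0) h0
  refine not_three h2 (x := b) (y := a - b) (z := a + b) ?_ ?_ ?_ ?_ ?_ ?_
  · exact ⟨hab, by rw [zero_sub, nneg hN]; exact hb⟩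
  · constructor
    · rw [show a - (a - b) = b by abel]; exact hb
    · rw [zero_sub, nneg hN]; exact hab
  · constructor
    · rw [show a - (a + b) = -b by abel, nneg hN]; exact hb
    · rw [zero_sub, nneg hN]; exact hs
  · intro h
    have h1 : a = (2 : ℝ) • b := by
      rw [two_smul]
      have := eq_sub_iff_add_eq.mp h
      linear_combination (norm := abel) -this
    have h3 := hN.smul_eq 2 b
    rw [← h1, ha, hb, show |(2 : ℝ)| = 2 by norm_num] at h3
    linarith
  · intro h
    have h1 : b = a + b → a = 0 := by
      intro hh
      have := congrArg (fun t => t - b) hh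
      simpa using this.symm
    have h2' := h1 h
    rw [h2', nzero hN] at ha
    linarith
  · intro h
    have h1 : b = 0 := by
      have := congrArg (fun t => t - a + b) h
      simp at this
      have h2' : b + b = 0 := by linear_combination (norm := abel) -this
      have h3' : (2 : ℝ) • b = 0 := by rw [two_smul]; exact h2'
      exact (smul_eq_zero.mp h3').resolve_left (by norm_num)
    rw [h1, nzero hN] at hb
    linarith

theorem lemE_ge (hN : IsNorm N) {d : ℝ} {a b : ℝ × ℝ}
    (ha : N a = d) (hab : N (a - b) = d) : d ≤ N (a + b) := by
  have h := hN.add_le (a + b) (a - b)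
  have he : a + b + (a - b) = (2 : ℝ) • a := by rw [two_smul]; abel
  rw [he, hN.smul_eq, ha, hab, show |(2 : ℝ)| = 2 by norm_num] at h
  linarith

theorem lemF (hN : IsNorm N) (hU : IsURTC N) {d : ℝ} (hd : 0 < d) {φ : ℝ × ℝ → ℝ × ℝ}
    (hφ : ∀ x y : ℝ × ℝ, N (x - y) = d → N (φ x - φ y) = d) {a A B : ℝ × ℝ}
    (h1 : N (a - A) = d) (h2 : N (a - B) = d) (h3 : N (A - B) = d) :
    φ (A + B - a) = φ a ∨ φ (A + B - a) = φ A + φ B - φ a := by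
  have hAB : N (φ A - φ B) = d := hφ A B h3
  have hS := twoset hN hU hd (p := φ A) (q := φ B) hAB
  have hmema : φ a ∈ {x : ℝ × ℝ | N (φ A - x) = d ∧ N (φ B - x) = d} := by
    constructor
    · rw [nsub_comm hN]; exact hφ a A h1
    · rw [nsub_comm hN]; exact hφ a B h2
  have hmemw : (φ A + φ B - φ a) ∈ {x : ℝ × ℝ | N (φ A - x) = d ∧ N (φ B - x) = d} := by
    constructor
    · rw [show φ A - (φ A + φ B - φ a) = φ a - φ B by abel]; exact hφ a B h2
    · rw [show φ B - (φ A + φ B - φ a) = φ a - φ A by abel]; exact hφ a A h1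
  have hne : φ a ≠ φ A + φ B - φ a := by
    intro h
    have hkey : φ A - φ B = (2 : ℝ) • (φ A - φ a) := by
      rw [two_smul]
      linear_combination (norm := abel) h
    have h4 := hN.smul_eq 2 (φ A - φ a)
    rw [← hkey, hAB, hφ A a (by rw [nsub_comm hN]; exact h1),
      show |(2 : ℝ)| = 2 by norm_num] at h4
    linarith
  have hset := pair_eq hS hmema hmemw hne
  have hmemf : φ (A + B - a) ∈ {x : ℝ × ℝ | N (φ A - x) = d ∧ N (φ B - x) = d} := by
    constructor
    · exact hφ A (A + B - a) (by rw [show A - (A + B - a) = a - B by abel]; exact h2)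
    · exact hφ B (A + B - a) (by rw [show B - (A + B - a) = a - A by abel]; exact h1)
  rw [hset] at hmemf
  rcases hmemf with h | h
  · exact Or.inl h
  · exact Or.inr h


theorem keyexists (hN : IsNorm N) (hU : IsURTC N) {d : ℝ} (hd : 0 < d) {u v : ℝ × ℝ}
    (hu : N u = d) (hv : N v = d) (huv : N (u - v) = d) :
    ∃ a b : ℝ × ℝ, N a = d ∧ N b = d ∧ N (a - b) = d ∧ N (a + b + (u + v)) = d := by
  classical
  -- the compact "circle" of radius d
  obtain ⟨m, hm, hml⟩ := nlower hN
  have hKcl : IsClosed {b : ℝ × ℝ | N b = d} := isClosed_eq (ncont hN) continuous_const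
  have hKb : Bornology.IsBounded {b : ℝ × ℝ | N b = d} := by
    apply (Metric.isBounded_closedBall (x := (0 : ℝ × ℝ)) (r := d / m)).subset
    intro b hb
    have hb' : N b = d := hb
    have h1 := hml b
    rw [Metric.mem_closedBall, dist_zero_right]
    rw [hb'] at h1
    rw [le_div_iff₀ hm]
    linarith
  have hKcomp : IsCompact {b : ℝ × ℝ | N b = d} :=
    Metric.isCompact_of_isClosed_isBounded hKcl hKb
  -- the partner function
  obtain ⟨partner, hpartnerdef⟩ : ∃ f : ℝ × ℝ → ℝ × ℝ, f = fun x =>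
      if h : ∃ b : ℝ × ℝ, N b = d ∧ N (x - b) = d then h.choose else 0 := ⟨_, rfl⟩
  have hpartner : ∀ x : ℝ × ℝ, N x = d → N (partner x) = d ∧ N (x - partner x) = d := by
    intro x hx
    have h2 := twoset hN hU hd (p := x) (q := (0 : ℝ × ℝ)) (by simpa using hx)
    have hne : {y : ℝ × ℝ | N (x - y) = d ∧ N (0 - y) = d}.Nonempty :=
      Set.nonempty_of_encard_ne_zero (by rw [h2]; norm_num)
    obtain ⟨y, hy1, hy2⟩ := hne
    have hex : ∃ b : ℝ × ℝ, N b = d ∧ N (x - b) = d := by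
      refine ⟨y, ?_, hy1⟩
      rw [zero_sub, nneg hN] at hy2; exact hy2
    simp only [hpartnerdef]
    rw [dif_pos hex]
    exact ⟨hex.choose_spec.1, hex.choose_spec.2⟩
  have hpartner_cases : ∀ x b : ℝ × ℝ, N x = d → N b = d → N (x - b) = d →
      b = partner x ∨ b = x - partner x := by
    intro x b hx hb hxb
    have h2 := twoset hN hU hd (p := x) (q := (0 : ℝ × ℝ)) (by simpa using hx)
    have hp := hpartner x hx
    have hmem1 : partner x ∈ {y : ℝ × ℝ | N (x - y) = d ∧ N (0 - y) = d} :=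
      ⟨hp.2, by rw [zero_sub, nneg hN]; exact hp.1⟩
    have hmem2 : x - partner x ∈ {y : ℝ × ℝ | N (x - y) = d ∧ N (0 - y) = d} := by
      constructor
      · rw [show x - (x - partner x) = partner x by abel]; exact hp.1
      · rw [zero_sub, nneg hN]; exact hp.2
    have hne : partner x ≠ x - partner x := by
      intro h
      have h1 : x = (2 : ℝ) • partner x := by
        rw [two_smul]
        linear_combination (norm := abel) -h
      have h3 := hN.smul_eq 2 (partner x)
      rw [← h1, hx, hp.1, show |(2 : ℝ)| = 2 by norm_num] at h3
      linarith
    have hset := pair_eq h2 hmem1 hmem2 hne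
    have hbmem : b ∈ {y : ℝ × ℝ | N (x - y) = d ∧ N (0 - y) = d} :=
      ⟨hxb, by rw [zero_sub, nneg hN]; exact hb⟩
    rw [hset] at hbmem
    simpa using hbmem
  -- the combined diagonal function
  set s : ℝ × ℝ := u + v with hsdef
  obtain ⟨F, hFdef⟩ : ∃ F : ℝ × ℝ → ℝ × ℝ → ℝ, F = fun x b =>
      (N (x + b + s) - d) * (N (x + (x - b) + s) - d) := ⟨_, rfl⟩
  have hFswap : ∀ x b : ℝ × ℝ, F x (x - b) = F x b := by
    intro x b
    simp only [hFdef]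
    rw [show x - (x - b) = b by abel]
    ring
  have hFval : ∀ x b : ℝ × ℝ, N x = d → N b = d → N (x - b) = d →
      F x b = F x (partner x) := by
    intro x b hx hb hxb
    rcases hpartner_cases x b hx hb hxb with h | h
    · rw [h]
    · rw [h, hFswap x (partner x)]
  -- the path
  obtain ⟨γ, hγdef⟩ : ∃ γ : ℝ → ℝ × ℝ, γ = fun θ =>
      Real.cos (Real.pi * θ) • u + Real.sin (Real.pi * θ) • (-u.2, u.1) := ⟨_, rfl⟩
  have hγcont : Continuous γ := by
    rw [hγdef]; fun_prop
  have hγne : ∀ θ : ℝ, γ θ ≠ 0 := by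
    intro θ h
    simp only [hγdef] at h
    rw [Prod.ext_iff] at h
    obtain ⟨h1, h2⟩ := h
    simp only [Prod.fst_add, Prod.snd_add, Prod.smul_fst, Prod.smul_snd, smul_eq_mul,
      Prod.fst_zero, Prod.snd_zero] at h1 h2
    have pyth := Real.sin_sq_add_cos_sq (Real.pi * θ)
    have hu1 : u.1 = 0 := by
      linear_combination Real.cos (Real.pi * θ) * h1 + Real.sin (Real.pi * θ) * h2 - u.1 * pyth
    have hu2 : u.2 = 0 := by
      linear_combination (-Real.sin (Real.pi * θ)) * h1 + Real.cos (Real.pi * θ) * h2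
        - u.2 * pyth
    have hu0 : u = 0 := by
      rw [Prod.ext_iff]
      exact ⟨by simpa using hu1, by simpa using hu2⟩
    rw [hu0, nzero hN] at hu
    linarith
  have hNγpos : ∀ θ : ℝ, 0 < N (γ θ) := fun θ => npos hN (hγne θ)
  obtain ⟨p, hpdef⟩ : ∃ p : ℝ → ℝ × ℝ, p = fun θ => (d / N (γ θ)) • γ θ := ⟨_, rfl⟩
  have hpcont : Continuous p := by
    rw [hpdef]
    exact (continuous_const.div ((ncont hN).comp hγcont) fun θ => (hNγpos θ).ne').smul hγcont
  have hpd : ∀ θ : ℝ, N (p θ) = d := by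
    intro θ
    simp only [hpdef]
    rw [hN.smul_eq, abs_of_pos (div_pos hd (hNγpos θ)), div_mul_cancel₀ _ (hNγpos θ).ne']
  have hγ0 : γ 0 = u := by simp [hγdef]
  have hγ1 : γ 1 = -u := by simp [hγdef]
  have hp0 : p 0 = u := by
    simp only [hpdef]
    rw [hγ0, hu, div_self hd.ne', one_smul]
  have hp1 : p 1 = -u := by
    simp only [hpdef]
    rw [hγ1, nneg hN, hu, div_self hd.ne', one_smul]
  -- the test function
  obtain ⟨g, hgdef⟩ : ∃ g : ℝ → ℝ, g = fun θ => F (p θ) (partner (p θ)) := ⟨_, rfl⟩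
  have hgcont : Continuous g := by
    apply SeqContinuous.continuous
    intro θs θ hθ
    apply Filter.tendsto_of_subseq_tendsto
    intro ns hns
    have hbsK : ∀ n : ℕ, partner (p (θs (ns n))) ∈ {b : ℝ × ℝ | N b = d} :=
      fun n => (hpartner _ (hpd _)).1
    obtain ⟨bstar, hbstarK, ms, hms, hbtend⟩ := hKcomp.tendsto_subseq hbsK
    refine ⟨ms, ?_⟩
    have hθtend : Filter.Tendsto (fun n => θs (ns (ms n))) Filter.atTop (nhds θ) :=
      hθ.comp (hns.comp hms.tendsto_atTop)
    have hxtend : Filter.Tendsto (fun n => p (θs (ns (ms n)))) Filter.atTop (nhds (p θ)) :=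
      (hpcont.tendsto θ).comp hθtend
    have hNbstar : N bstar = d := hbstarK
    have hsub : Filter.Tendsto
        (fun n => p (θs (ns (ms n))) - partner (p (θs (ns (ms n)))))
        Filter.atTop (nhds (p θ - bstar)) := hxtend.sub hbtend
    have hNxb : N (p θ - bstar) = d := by
      have htt := ((ncont hN).tendsto _).comp hsub
      have hconst : ∀ n : ℕ, N (p (θs (ns (ms n))) - partner (p (θs (ns (ms n))))) = d :=
        fun n => (hpartner _ (hpd _)).2
      exact tendsto_nhds_unique ((Filter.tendsto_congr hconst).mp htt) tendsto_const_nhds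
    have hFcont : Continuous fun q : (ℝ × ℝ) × (ℝ × ℝ) => F q.1 q.2 := by
      simp only [hFdef]
      have c1 : Continuous fun q : (ℝ × ℝ) × (ℝ × ℝ) => q.1 + q.2 + s := by fun_prop
      have c2 : Continuous fun q : (ℝ × ℝ) × (ℝ × ℝ) => q.1 + (q.1 - q.2) + s := by fun_prop
      exact (((ncont hN).comp c1).sub continuous_const).mul
        (((ncont hN).comp c2).sub continuous_const)
    have hgoal : Filter.Tendsto
        (fun n => F (p (θs (ns (ms n)))) (partner (p (θs (ns (ms n))))))
        Filter.atTop (nhds (F (p θ) bstar)) :=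
      (hFcont.tendsto _).comp (hxtend.prodMk_nhds hbtend)
    have heq2 : F (p θ) bstar = g θ := by
      simp only [hgdef]
      exact hFval (p θ) bstar (hpd θ) hNbstar hNxb
    rw [heq2] at hgoal
    simpa only [hgdef, Function.comp_apply] using hgoal
  -- endpoint values
  have hg0 : 0 < g 0 := by
    have h1 : g 0 = F u (partner u) := by simp only [hgdef, hp0]
    have h2 : F u v = F u (partner u) := hFval u v hu hv huv
    have e1 : u + v + s = (2 : ℝ) • s := by rw [hsdef, two_smul]
    have e2 : u + (u - v) + s = (3 : ℝ) • u := by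
      rw [hsdef, show (3 : ℝ) = 1 + 1 + 1 by norm_num, add_smul, add_smul, one_smul]
      abel
    have h3 : F u v = (N ((2 : ℝ) • s) - d) * (N ((3 : ℝ) • u) - d) := by
      simp only [hFdef]
      rw [e1, e2]
    have h4 : N ((2 : ℝ) • s) = 2 * N s := by
      rw [hN.smul_eq, show |(2 : ℝ)| = 2 by norm_num]
    have h5 : N ((3 : ℝ) • u) = 3 * d := by
      rw [hN.smul_eq, hu, show |(3 : ℝ)| = 3 by norm_num]
    have h6 : d ≤ N s := by rw [hsdef]; exact lemE_ge hN hu huv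
    rw [h1, ← h2, h3, h4, h5]
    have hA : 0 < 2 * N s - d := by linarith
    have hB : 0 < 3 * d - d := by linarith
    exact mul_pos hA hB
  have hg1 : g 1 < 0 := by
    have h1 : g 1 = F (-u) (partner (-u)) := by simp only [hgdef, hp1]
    have hnu : N (-u) = d := by rw [nneg hN]; exact hu
    have hnv : N (-v) = d := by rw [nneg hN]; exact hv
    have hnuv : N (-u - -v) = d := by
      rw [show -u - -v = -(u - v) by abel, nneg hN]; exact huv
    have h2 : F (-u) (-v) = F (-u) (partner (-u)) := hFval (-u) (-v) hnu hnv hnuv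
    have e1 : -u + -v + s = 0 := by rw [hsdef]; abel
    have e2 : -u + (-u - -v) + s = v + (v - u) := by rw [hsdef]; abel
    have h3 : F (-u) (-v) = (N (0 : ℝ × ℝ) - d) * (N (v + (v - u)) - d) := by
      simp only [hFdef]
      rw [e1, e2]
    have h4 : N (v - u) = d := by rw [nsub_comm hN]; exact huv
    have h5 : N (v - (v - u)) = d := by rw [show v - (v - u) = u by abel]; exact hu
    have h6 : d ≤ N (v + (v - u)) := lemE_ge hN hv h5
    have h7 : N (v + (v - u)) ≠ d := lemE hN hU hd hv h4 h5
    have h8 : 0 < N (v + (v - u)) - d := by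
      rcases h6.lt_or_eq with h | h
      · linarith
      · exact absurd h.symm h7
    rw [h1, ← h2, h3, nzero hN]
    exact mul_neg_of_neg_of_pos (by linarith) h8
  -- intermediate value
  obtain ⟨θ, hθmem, hθ0⟩ : ∃ θ ∈ Set.Icc (0 : ℝ) 1, g θ = 0 := by
    have h := intermediate_value_Icc' zero_le_one hgcont.continuousOn
    have hz : (0 : ℝ) ∈ Set.Icc (g 1) (g 0) := ⟨hg1.le, hg0.le⟩
    obtain ⟨θ, hθ1, hθ2⟩ := h hz
    exact ⟨θ, hθ1, hθ2⟩
  have hx := hpd θ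
  have hp' := hpartner (p θ) hx
  have hmul : (N (p θ + partner (p θ) + s) - d) *
      (N (p θ + (p θ - partner (p θ)) + s) - d) = 0 := by
    have hh : g θ = F (p θ) (partner (p θ)) := by simp only [hgdef]
    rw [hh] at hθ0
    simpa only [hFdef] using hθ0
  rcases mul_eq_zero.mp hmul with h | h
  · exact ⟨p θ, partner (p θ), hx, hp'.1, hp'.2, sub_eq_zero.mp h⟩
  · refine ⟨p θ, p θ - partner (p θ), hx, hp'.2, ?_, sub_eq_zero.mp h⟩
    rw [show p θ - (p θ - partner (p θ)) = partner (p θ) by abel]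
    exact hp'.1

end URTCAux

open URTCAux

/-- For a URTC-norm, a map preserving distance `d` sends any regular `d`-position
triple `(b₀, b₁, b₂)` so that `φ (b₁ + b₂ - b₀) = φ b₁ + φ b₂ - φ b₀`. -/
theorem preserves_fourth_vertex (N : ℝ × ℝ → ℝ) (hN : IsNorm N) (hU : IsURTC N)
    (d : ℝ) (hd : 0 < d) (φ : ℝ × ℝ → ℝ × ℝ)
    (hφ : ∀ x y : ℝ × ℝ, N (x - y) = d → N (φ x - φ y) = d)
    (b₀ b₁ b₂ : ℝ × ℝ)
    (h01 : N (b₀ - b₁) = d) (h12 : N (b₁ - b₂) = d) (h20 : N (b₂ - b₀) = d) :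
    φ (b₁ + b₂ - b₀) = φ b₁ + φ b₂ - φ b₀ := by
  classical
  have h02 : N (b₀ - b₂) = d := by rw [nsub_comm hN]; exact h20
  have hmain := lemF hN hU hd hφ (a := b₀) (A := b₁) (B := b₂) h01 h02 h12
  rcases hmain with hcol | hgood
  · -- collapse case: derive a contradiction
    exfalso
    have hu : N (b₁ - b₀) = d := by rw [nsub_comm hN]; exact h01
    have hv : N (b₂ - b₀) = d := h20
    have huv : N ((b₁ - b₀) - (b₂ - b₀)) = d := by
      rw [show (b₁ - b₀) - (b₂ - b₀) = b₁ - b₂ by abel]; exact h12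
    obtain ⟨a, b, ha, hb, hab, hsum⟩ := keyexists hN hU hd hu hv huv
    set w : ℝ × ℝ := b₁ + b₂ - b₀ with hw
    set x : ℝ × ℝ := w + a + b with hxdef
    have hx0 : N (x - b₀) = d := by
      rw [show x - b₀ = a + b + ((b₁ - b₀) + (b₂ - b₀)) by rw [hxdef, hw]; abel]
      exact hsum
    have hφx : N (φ x - φ b₀) = d := hφ x b₀ hx0
    have hF := lemF hN hU hd hφ (a := w) (A := w + a) (B := w + b)
      (by rw [show w - (w + a) = -a by abel, nneg hN]; exact ha)
      (by rw [show w - (w + b) = -b by abel, nneg hN]; exact hb)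
      (by rw [show (w + a) - (w + b) = a - b by abel]; exact hab)
    rw [show (w + a) + (w + b) - w = x by rw [hxdef]; abel] at hF
    rcases hF with h1 | h2
    · rw [h1, hcol, sub_self, nzero hN] at hφx
      linarith
    · have ha' : N (φ (w + a) - φ w) = d := hφ _ _ (by rw [show (w + a) - w = a by abel]; exact ha)
      have hb' : N (φ (w + b) - φ w) = d := hφ _ _ (by rw [show (w + b) - w = b by abel]; exact hb)
      have hab' : N ((φ (w + a) - φ w) - (φ (w + b) - φ w)) = d := by
        rw [show (φ (w + a) - φ w) - (φ (w + b) - φ w) = φ (w + a) - φ (w + b) by abel]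
        exact hφ _ _ (by rw [show (w + a) - (w + b) = a - b by abel]; exact hab)
      have hE := lemE hN hU hd ha' hb' hab'
      apply hE
      rw [show (φ (w + a) - φ w) + (φ (w + b) - φ w) = (φ (w + a) + φ (w + b) - φ w) - φ w by abel,
        ← h2, hcol]
      exact hφx
  · exact hgood
end

section
/- Let ‖·‖ be a URTC-norm on ℝ², let d > 0, and let φ : ℝ² → ℝ² be a map that preserves distance d. Then for all b₀, b₂ ∈ ℝ² with ‖b₀ − b₂‖ = d, one has φ(2b₂ − b₀) = 2φ(b₂) − φ(b₀). -/
section Aux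

variable {N : ℝ × ℝ → ℝ} (hN : IsNorm N)
include hN

lemma N_zero : N 0 = 0 := by
  have := hN.smul_eq 0 0
  simpa using this

lemma N_neg (x : ℝ × ℝ) : N (-x) = N x := by
  have := hN.smul_eq (-1) x
  simpa using this

lemma N_nonneg (x : ℝ × ℝ) : 0 ≤ N x := by
  have h := hN.add_le x (-x)
  rw [add_neg_cancel, N_zero hN, N_neg hN] at h
  linarith

lemma N_sub_rev (x y : ℝ × ℝ) : N (x - y) = N (y - x) := by
  rw [← N_neg hN (x - y), neg_sub]

lemma N_two (x : ℝ × ℝ) : N (x + x) = 2 * N x := by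
  have := hN.smul_eq 2 x
  rw [two_smul] at this
  rw [this]; norm_num

lemma N_pos {x : ℝ × ℝ} (hx : x ≠ 0) : 0 < N x := by
  rcases lt_or_eq_of_le (N_nonneg hN x) with h | h
  · exact h
  · exact absurd (hN.eq_zero_of x h.symm) hx

end Aux

section Main

variable {N : ℝ × ℝ → ℝ} (hN : IsNorm N) (hU : IsURTC N) {d : ℝ} (hd : 0 < d)
include hN hU hd

/-- URTC scaled to radius `d`. -/
lemma encard_d (a b : ℝ × ℝ) (hab : N (a - b) = d) :
    {x : ℝ × ℝ | N (a - x) = d ∧ N (b - x) = d}.encard = 2 := by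
  have hd0 : d ≠ 0 := ne_of_gt hd
  have h1 : N (d⁻¹ • a - d⁻¹ • b) = 1 := by
    rw [← smul_sub, hN.smul_eq, abs_of_pos (inv_pos.mpr hd), hab]
    field_simp
  have key : {x : ℝ × ℝ | N (a - x) = d ∧ N (b - x) = d} =
      (fun y : ℝ × ℝ => d • y) ''
        {y : ℝ × ℝ | N (d⁻¹ • a - y) = 1 ∧ N (d⁻¹ • b - y) = 1} := by
    ext x
    simp only [Set.mem_setOf_eq, Set.mem_image]
    constructor
    · rintro ⟨h1', h2'⟩
      refine ⟨d⁻¹ • x, ⟨?_, ?_⟩, ?_⟩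
      · rw [← smul_sub, hN.smul_eq, abs_of_pos (inv_pos.mpr hd), h1']; field_simp
      · rw [← smul_sub, hN.smul_eq, abs_of_pos (inv_pos.mpr hd), h2']; field_simp
      · rw [smul_smul]; field_simp; rw [one_smul]
    · rintro ⟨y, ⟨hy1, hy2⟩, rfl⟩
      constructor
      · have : a - d • y = d • (d⁻¹ • a - y) := by
          rw [smul_sub, smul_smul]; field_simp; rw [one_smul]
        rw [this, hN.smul_eq, abs_of_pos hd, hy1, mul_one]
      · have : b - d • y = d • (d⁻¹ • b - y) := by
          rw [smul_sub, smul_smul]; field_simp; rw [one_smul]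
        rw [this, hN.smul_eq, abs_of_pos hd, hy2, mul_one]
  rw [key, Function.Injective.encard_image (smul_right_injective _ hd0) _]
  exact hU _ _ h1

/-- The circle-pair set is nonempty. -/
lemma pair_nonempty (a b : ℝ × ℝ) (hab : N (a - b) = d) :
    ∃ x, N (a - x) = d ∧ N (b - x) = d := by
  have h := encard_d hN hU hd a b hab
  rw [Set.encard_eq_two] at h
  obtain ⟨x, y, -, hs⟩ := h
  exact ⟨x, by
    have : x ∈ ({x, y} : Set (ℝ × ℝ)) := by simp
    rw [← hs] at this; exact this⟩

/-- Pair structure: any two members of the intersection set are equal or reflections. -/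
lemma pair_struct {a b x y : ℝ × ℝ} (hab : N (a - b) = d)
    (hx1 : N (a - x) = d) (hx2 : N (b - x) = d)
    (hy1 : N (a - y) = d) (hy2 : N (b - y) = d) :
    y = x ∨ y = a + b - x := by
  have h2 := encard_d hN hU hd a b hab
  set S := {z : ℝ × ℝ | N (a - z) = d ∧ N (b - z) = d} with hS
  have hxS : x ∈ S := ⟨hx1, hx2⟩
  have hyS : y ∈ S := ⟨hy1, hy2⟩
  -- the reflection of x is in S
  have hrefl : a + b - x ∈ S := by
    constructor
    · have : a - (a + b - x) = x - b := by ring_nf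
      rw [this, N_sub_rev hN, hx2]
    · have : b - (a + b - x) = x - a := by ring_nf
      rw [this, N_sub_rev hN, hx1]
  -- reflection differs from x
  have hne : a + b - x ≠ x := by
    intro h
    have hab2 : a - b = -((2 : ℝ) • (b - x)) := by
      linear_combination (norm := module) h
    have : N (a - b) = 2 * d := by
      rw [hab2, N_neg hN, hN.smul_eq, hx2]; norm_num
    rw [hab] at this; linarith
  rw [Set.encard_eq_two] at h2
  obtain ⟨u, w, huw, hset⟩ := h2
  rw [hset] at hxS hyS hrefl
  simp only [Set.mem_insert_iff, Set.mem_singleton_iff] at hxS hyS hrefl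
  rcases hxS with rfl | rfl <;> rcases hyS with rfl | rfl <;>
    rcases hrefl with h | h <;> tauto

/-- The two intersection points of circles at centers distance `d` apart are never
at distance `d` from each other. -/
lemma no_d_pair {a b x : ℝ × ℝ} (hab : N (a - b) = d)
    (hx1 : N (a - x) = d) (hx2 : N (b - x) = d) :
    N ((a + b - x) - x) ≠ d := by
  intro hcon
  set y := a + b - x with hy
  -- y and b are both in S(a, x)
  have hax : N (a - x) = d := hx1
  have hy1 : N (a - y) = d := by
    have : a - y = x - b := by rw [hy]; ring_nf
    rw [this, N_sub_rev hN, hx2]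
  have hy2 : N (x - y) = d := by
    have : x - y = -(y - x) := by ring
    rw [this, N_neg hN]
    exact hcon
  have hb1 : N (a - b) = d := hab
  have hb2 : N (x - b) = d := by rw [N_sub_rev hN, hx2]
  have := pair_struct hN hU hd hax hy1 hy2 hb1 hb2
  rcases this with h | h
  · -- b = y = a + b - x → x = a
    have hxa : a - x = 0 := by
      rw [hy] at h
      linear_combination (norm := module) -h
    rw [hxa, N_zero hN] at hx1
    exact absurd hx1.symm (ne_of_gt hd)
  · -- b = a + x - y = a + x - (a+b-x) = 2x - b → b = x
    have hbx : b - x = 0 := by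
      rw [hy] at h
      linear_combination (norm := module) ((2:ℝ)⁻¹ : ℝ) • h
    rw [hbx, N_zero hN] at hx2
    exact absurd hx2.symm (ne_of_gt hd)

end Main

section Topo

variable {N : ℝ × ℝ → ℝ} (hN : IsNorm N)
include hN

lemma N_le_bound : ∀ z : ℝ × ℝ, N z ≤ (N (1,0) + N (0,1)) * ‖z‖ := by
  intro z
  have hz : z = z.1 • ((1:ℝ),(0:ℝ)) + z.2 • ((0:ℝ),(1:ℝ)) := by
    apply Prod.ext <;> simp
  calc N z ≤ N (z.1 • ((1:ℝ),(0:ℝ))) + N (z.2 • ((0:ℝ),(1:ℝ))) := by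
        nth_rewrite 1 [hz]; exact hN.add_le _ _
    _ = |z.1| * N (1,0) + |z.2| * N (0,1) := by rw [hN.smul_eq, hN.smul_eq]
    _ ≤ ‖z‖ * N (1,0) + ‖z‖ * N (0,1) := by
        have h1 : |z.1| ≤ ‖z‖ := by
          have := norm_fst_le z; simpa using this
        have h2 : |z.2| ≤ ‖z‖ := by
          have := norm_snd_le z; simpa using this
        have n1 : 0 ≤ N ((1:ℝ),(0:ℝ)) := N_nonneg hN _
        have n2 : 0 ≤ N ((0:ℝ),(1:ℝ)) := N_nonneg hN _
        nlinarith
    _ = (N (1,0) + N (0,1)) * ‖z‖ := by ring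

lemma N_continuous : Continuous N := by
  set K : ℝ := N (1,0) + N (0,1) with hK
  have hK0 : 0 ≤ K := by
    have n1 : 0 ≤ N ((1:ℝ),(0:ℝ)) := N_nonneg hN _
    have n2 : 0 ≤ N ((0:ℝ),(1:ℝ)) := N_nonneg hN _
    linarith
  have key : ∀ x y : ℝ × ℝ, N x - N y ≤ N (x - y) := by
    intro x y
    have := hN.add_le (x - y) y
    rw [sub_add_cancel] at this
    linarith
  apply (LipschitzWith.of_dist_le_mul (K := K.toNNReal) ?_).continuous
  intro x y
  rw [Real.dist_eq, Real.coe_toNNReal _ hK0, dist_eq_norm]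
  have h1 := (key x y).trans (N_le_bound hN (x - y))
  have h2 := (key y x).trans (N_le_bound hN (y - x))
  rw [← norm_neg (y - x), neg_sub] at h2
  rw [abs_le]
  constructor <;> rw [hK] <;> linarith

lemma N_lower : ∃ c : ℝ, 0 < c ∧ ∀ z : ℝ × ℝ, c * ‖z‖ ≤ N z := by
  have hcs : IsCompact (Metric.sphere (0:ℝ×ℝ) 1) := isCompact_sphere 0 1
  have hne : (Metric.sphere (0:ℝ×ℝ) 1).Nonempty := by
    refine ⟨((1:ℝ),(0:ℝ)), ?_⟩
    simp [Prod.norm_def]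
  obtain ⟨z₀, hz₀, hmin⟩ := hcs.exists_isMinOn hne (N_continuous hN).continuousOn
  have hz₀0 : z₀ ≠ 0 := by
    intro h
    rw [Metric.mem_sphere, dist_zero_right, h] at hz₀
    simp at hz₀
  refine ⟨N z₀, N_pos hN hz₀0, ?_⟩
  intro z
  rcases eq_or_ne z 0 with rfl | hz
  · simp [N_zero hN]
  · have hnz : (0:ℝ) < ‖z‖ := norm_pos_iff.mpr hz
    have hu : ‖z‖⁻¹ • z ∈ Metric.sphere (0:ℝ×ℝ) 1 := by
      simp [norm_smul, abs_of_pos (inv_pos.mpr hnz), inv_mul_cancel₀ (ne_of_gt hnz)]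
    have hle : N z₀ ≤ N (‖z‖⁻¹ • z) := hmin hu
    have hNu : N (‖z‖⁻¹ • z) = ‖z‖⁻¹ * N z := by
      rw [hN.smul_eq, abs_of_pos (inv_pos.mpr hnz)]
    rw [hNu] at hle
    have this := hle
    -- this : N z₀ ≤ ‖z‖⁻¹ * N z
    calc N z₀ * ‖z‖ ≤ (‖z‖⁻¹ * N z) * ‖z‖ := by nlinarith
      _ = N z := by field_simp

lemma circle_connected {d : ℝ} (hd : 0 < d) : IsConnected {z : ℝ × ℝ | N z = d} := by
  have hrank : 1 < Module.rank ℝ (ℝ × ℝ) := by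
    rw [rank_prod', Module.rank_self ℝ]
    norm_num
  have h1 : IsConnected (Metric.sphere (0:ℝ×ℝ) 1) :=
    isConnected_sphere hrank 0 zero_le_one
  have himg : IsConnected ((fun z : ℝ × ℝ => (d / N z) • z) '' Metric.sphere (0:ℝ×ℝ) 1) := by
    apply h1.image
    refine ContinuousOn.smul (f := fun z : ℝ × ℝ => d / N z) (g := fun z => z) ?_ ?_
    · apply ContinuousOn.div continuousOn_const (N_continuous hN).continuousOn
      intro z hz
      have hz0 : z ≠ 0 := by
        intro h
        rw [Metric.mem_sphere, dist_zero_right, h] at hz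
        simp at hz
      exact ne_of_gt (N_pos hN hz0)
    · exact continuousOn_id
  have hset : (fun z : ℝ × ℝ => (d / N z) • z) '' Metric.sphere (0:ℝ×ℝ) 1
      = {z : ℝ × ℝ | N z = d} := by
    ext w
    simp only [Set.mem_image, Set.mem_setOf_eq]
    constructor
    · rintro ⟨z, hz, rfl⟩
      have hz0 : z ≠ 0 := by
        intro h
        rw [Metric.mem_sphere, dist_zero_right, h] at hz
        simp at hz
      have hNz : 0 < N z := N_pos hN hz0
      rw [hN.smul_eq, abs_of_pos (div_pos hd hNz)]
      field_simp
    · intro hw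
      have hw0 : w ≠ 0 := by
        intro h
        rw [h, N_zero hN] at hw
        exact (ne_of_gt hd) hw.symm
      have hnw : (0:ℝ) < ‖w‖ := norm_pos_iff.mpr hw0
      refine ⟨‖w‖⁻¹ • w, ?_, ?_⟩
      · simp [norm_smul, abs_of_pos (inv_pos.mpr hnw), inv_mul_cancel₀ (ne_of_gt hnw)]
      · have hNu : N (‖w‖⁻¹ • w) = ‖w‖⁻¹ * N w := by
          rw [hN.smul_eq, abs_of_pos (inv_pos.mpr hnw)]
        rw [hNu, hw, smul_smul]
        have : d / (‖w‖⁻¹ * d) * ‖w‖⁻¹ = 1 := by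
          field_simp
        rw [this, one_smul]
  rw [← hset]
  exact himg

end Topo

section Spindle

variable {N : ℝ × ℝ → ℝ} (hN : IsNorm N) (hU : IsURTC N) {d : ℝ} (hd : 0 < d)
include hN hU hd

/-- Spindle: for any rhombus `(α, β)` there is a rhombus `(α', β')` whose diagonal is at
distance exactly `d` from the diagonal `α + β`. -/
lemma spindle {α β : ℝ × ℝ} (hα : N α = d) (hβ : N β = d) (hαβ : N (α - β) = d) :
    ∃ α' β' : ℝ × ℝ, N α' = d ∧ N β' = d ∧ N (α' - β') = d ∧
      N (α' + β' - (α + β)) = d := by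
  classical
  have hNc := N_continuous hN
  set v : ℝ × ℝ := α + β with hv
  set m : ℝ := N v with hm
  -- m ≥ d
  have hmd : d ≤ m := by
    have h1 : N (α + α) = 2 * d := by rw [N_two hN, hα]
    have h2 : α + α = v + (α - β) := by rw [hv]; module
    have h3 : N (v + (α - β)) ≤ m + d := by
      rw [← hαβ, hm]; exact hN.add_le _ _
    have h4 : N (α + α) ≤ m + d := by rw [h2]; exact h3
    rw [h1] at h4
    linarith
  -- the choice function for the second vertex of a rhombus on first vertex z
  set bc : ℝ × ℝ → ℝ × ℝ := fun z =>
    if h : ∃ y, N (0 - y) = d ∧ N (z - y) = d then h.choose else 0 with hbc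
  have bc_spec : ∀ z : ℝ × ℝ, N z = d → N (0 - bc z) = d ∧ N (z - bc z) = d := by
    intro z hz
    have hex : ∃ y, N ((0:ℝ×ℝ) - y) = d ∧ N (z - y) = d := by
      apply pair_nonempty hN hU hd
      rw [zero_sub, N_neg hN, hz]
    rw [hbc]
    simp only [dif_pos hex]
    exact hex.choose_spec
  have bc_norm : ∀ z : ℝ × ℝ, N z = d → N (bc z) = d := by
    intro z hz
    have := (bc_spec z hz).1
    rwa [zero_sub, N_neg hN] at this
  -- the fiber-symmetric product function
  set H : (ℝ × ℝ) × (ℝ × ℝ) → ℝ := fun q =>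
    (N (q.1 + q.2 - v) - d) * (N (q.1 + q.1 - q.2 - v) - d) with hH
  set F : ℝ × ℝ → ℝ := fun z => H (z, bc z) with hF
  have Hcont : Continuous H := by
    apply Continuous.mul
    · exact (hNc.comp (((continuous_fst.add continuous_snd)).sub continuous_const)).sub
        continuous_const
    · exact (hNc.comp ((((continuous_fst.add continuous_fst)).sub continuous_snd).sub
        continuous_const)).sub continuous_const
  -- fiber invariance
  have Hinv : ∀ z y : ℝ × ℝ, N z = d → N y = d → N (z - y) = d → H (z, y) = F z := by
    intro z y hz hy hzy
    obtain ⟨hb1, hb2⟩ := bc_spec z hz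
    have hy1 : N ((0:ℝ×ℝ) - y) = d := by rw [zero_sub, N_neg hN, hy]
    have hzz : N ((0:ℝ×ℝ) - z) = d := by rw [zero_sub, N_neg hN, hz]
    have := pair_struct hN hU hd (a := (0:ℝ×ℝ)) (b := z) hzz hb1 hb2 hy1 hzy
    rcases this with h | h
    · rw [h]
    · -- y = z - bc z ; product symmetric
      rw [hF]
      simp only [hH]
      have e1 : z + y - v = z + z - bc z - v := by rw [h]; module
      have e2 : z + z - y - v = z + bc z - v := by rw [h]; module
      rw [e1, e2]
      ring
  -- the compact rhombus set
  set D : Set ((ℝ × ℝ) × (ℝ × ℝ)) :=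
    {q | N q.1 = d ∧ N q.2 = d ∧ N (q.1 - q.2) = d} with hD
  have hDclosed : IsClosed D := by
    have c1 : IsClosed {q : (ℝ×ℝ)×(ℝ×ℝ) | N q.1 = d} :=
      isClosed_eq (hNc.comp continuous_fst) continuous_const
    have c2 : IsClosed {q : (ℝ×ℝ)×(ℝ×ℝ) | N q.2 = d} :=
      isClosed_eq (hNc.comp continuous_snd) continuous_const
    have c3 : IsClosed {q : (ℝ×ℝ)×(ℝ×ℝ) | N (q.1 - q.2) = d} :=
      isClosed_eq (hNc.comp (continuous_fst.sub continuous_snd)) continuous_const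
    have : D = {q : (ℝ×ℝ)×(ℝ×ℝ) | N q.1 = d} ∩
        ({q : (ℝ×ℝ)×(ℝ×ℝ) | N q.2 = d} ∩ {q : (ℝ×ℝ)×(ℝ×ℝ) | N (q.1 - q.2) = d}) := by
      ext q; simp [hD, Set.mem_setOf_eq, and_assoc]
    rw [this]
    exact c1.inter (c2.inter c3)
  obtain ⟨c, hc, hcle⟩ := N_lower hN
  have hDcompact : IsCompact D := by
    apply IsCompact.of_isClosed_subset (isCompact_closedBall (0 : (ℝ×ℝ)×(ℝ×ℝ)) (d / c))
      hDclosed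
    intro q hq
    rw [hD, Set.mem_setOf_eq] at hq
    rw [Metric.mem_closedBall, dist_zero_right]
    have hb1 : ‖q.1‖ ≤ d / c := by
      have := hcle q.1; rw [hq.1] at this
      rw [le_div_iff₀ hc]; linarith
    have hb2 : ‖q.2‖ ≤ d / c := by
      have := hcle q.2; rw [hq.2.1] at this
      rw [le_div_iff₀ hc]; linarith
    calc ‖q‖ = max ‖q.1‖ ‖q.2‖ := rfl
      _ ≤ d / c := max_le hb1 hb2
  -- continuity of F on the circle
  set C : Set (ℝ × ℝ) := {z | N z = d} with hC
  have hFcont : ContinuousOn F C := by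
    intro z hz
    have hzd : N z = d := hz
    rw [ContinuousWithinAt, Metric.tendsto_nhdsWithin_nhds]
    intro ε hε
    -- the bad compact set
    set Kb : Set ((ℝ×ℝ)×(ℝ×ℝ)) := {q ∈ D | ε ≤ |H q - F z|} with hKb
    have hKbclosed : IsClosed Kb := by
      have heq : Kb = D ∩ {q | ε ≤ |H q - F z|} := rfl
      rw [heq]
      exact hDclosed.inter (isClosed_le continuous_const ((Hcont.sub continuous_const).abs))
    have hKbcompact : IsCompact Kb := by
      apply IsCompact.of_isClosed_subset hDcompact hKbclosed
      intro q hq; exact hq.1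
    have himgclosed : IsClosed (Prod.fst '' Kb) :=
      (hKbcompact.image continuous_fst).isClosed
    have hznot : z ∉ Prod.fst '' Kb := by
      rintro ⟨q, hqK, hq1⟩
      obtain ⟨⟨hd1, hd2, hd3⟩, hge⟩ := hqK
      have hHq : H (q.1, q.2) = F q.1 := Hinv q.1 q.2 hd1 hd2 hd3
      rw [Prod.mk.eta] at hHq
      rw [hHq, hq1] at hge
      simp at hge
      linarith
    -- get a ball avoiding the image
    have hopen : IsOpen (Prod.fst '' Kb)ᶜ := himgclosed.isOpen_compl
    obtain ⟨δ, hδ, hball⟩ := Metric.isOpen_iff.mp hopen z hznot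
    refine ⟨δ, hδ, ?_⟩
    intro x hx hdist
    have hxC : N x = d := hx
    have hxq : (x, bc x) ∈ D := by
      rw [hD, Set.mem_setOf_eq]
      exact ⟨hxC, bc_norm x hxC, (bc_spec x hxC).2⟩
    have hxnot : x ∉ Prod.fst '' Kb := by
      apply hball
      rw [Metric.mem_ball]
      exact hdist
    rw [Real.dist_eq]
    by_contra hcon
    push_neg at hcon
    apply hxnot
    refine ⟨(x, bc x), ?_, rfl⟩
    rw [hKb, Set.mem_setOf_eq]
    exact ⟨hxq, hcon⟩
  -- endpoint values
  have hmemnegα : (-α) ∈ C := by rw [hC, Set.mem_setOf_eq, N_neg hN, hα]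
  have hFnegα : F (-α) = (N (v + v) - d) * (N (α + (α + α)) - d) := by
    have h1 : N (-β) = d := by rw [N_neg hN, hβ]
    have h2 : N (-α - -β) = d := by
      have e : -α - -β = -(α - β) := by module
      rw [e, N_neg hN, hαβ]
    have := Hinv (-α) (-β) (by rw [N_neg hN, hα]) h1 h2
    rw [← this, hH]
    simp only
    have e1 : -α + -β - v = -(v + v) := by rw [hv]; module
    have e2 : -α + -α - -β - v = -(α + (α + α)) := by rw [hv]; module
    rw [e1, e2, N_neg hN, N_neg hN]
  have hval3 : N (α + (α + α)) = 3 * d := by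
    have : α + (α + α) = (3:ℝ) • α := by module
    rw [this, hN.smul_eq, hα]
    norm_num
  have hFnegα_pos : 0 < F (-α) := by
    rw [hFnegα, N_two hN, hval3]
    have hmd' : d ≤ N v := by rw [← hm]; exact hmd
    nlinarith
  -- one of F α, F β is ≤ 0  (in fact < 0)
  have hFα : F α = (0 - d) * (N (α - (β + β)) - d) := by
    have := Hinv α β hα hβ hαβ
    rw [← this, hH]
    simp only
    have e1 : α + β - v = 0 := by rw [hv]; module
    have e2 : α + α - β - v = α - (β + β) := by rw [hv]; module
    rw [e1, e2, N_zero hN]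
  have hFβ : F β = (0 - d) * (N (β - (α + α)) - d) := by
    have hβα : N (β - α) = d := by rw [N_sub_rev hN, hαβ]
    have := Hinv β α hβ hα hβα
    rw [← this, hH]
    simp only
    have e1 : β + α - v = 0 := by rw [hv]; module
    have e2 : β + β - α - v = β - (α + α) := by rw [hv]; module
    rw [e1, e2, N_zero hN]
  have hsum3 : 3 * d ≤ N (α - (β + β)) + N (β - (α + α)) := by
    have e : (α - (β + β)) - (β - (α + α)) = (3:ℝ) • (α - β) := by module
    have h3 : N ((α - (β + β)) - (β - (α + α))) = 3 * d := by
      rw [e, hN.smul_eq, hαβ]; norm_num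
    have htri : N ((α - (β + β)) - (β - (α + α))) ≤
        N (α - (β + β)) + N (β - (α + α)) := by
      have e2 : (α - (β + β)) - (β - (α + α)) = (α - (β + β)) + -(β - (α + α)) := by
        module
      rw [e2]
      calc N ((α - (β + β)) + -(β - (α + α))) ≤
          N (α - (β + β)) + N (-(β - (α + α))) := hN.add_le _ _
        _ = N (α - (β + β)) + N (β - (α + α)) := by rw [N_neg hN]
    linarith
  -- pick the negative endpoint
  have hnegpt : ∃ γ ∈ C, F γ ≤ 0 := by
    rcases le_or_gt d (N (α - (β + β))) with h | h
    · refine ⟨α, by rw [hC, Set.mem_setOf_eq, hα], ?_⟩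
      rw [hFα]
      nlinarith
    · refine ⟨β, by rw [hC, Set.mem_setOf_eq, hβ], ?_⟩
      rw [hFβ]
      have : d ≤ N (β - (α + α)) := by linarith
      nlinarith
  obtain ⟨γ, hγC, hγneg⟩ := hnegpt
  -- IVT
  have hconn : IsPreconnected (F '' C) :=
    ((circle_connected hN hd).image F hFcont).isPreconnected
  have h0mem : (0:ℝ) ∈ F '' C := by
    have hsub := hconn.Icc_subset (Set.mem_image_of_mem F hγC)
      (Set.mem_image_of_mem F hmemnegα)
    apply hsub
    exact ⟨hγneg, le_of_lt hFnegα_pos⟩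
  obtain ⟨z, hzC, hz0⟩ := h0mem
  have hzd : N z = d := hzC
  have hbz := bc_spec z hzd
  have hbzn : N (bc z) = d := bc_norm z hzd
  -- extract the zero factor
  rw [hF] at hz0
  simp only [hH] at hz0
  rcases mul_eq_zero.mp hz0 with h | h
  · refine ⟨z, bc z, hzd, hbzn, hbz.2, ?_⟩
    have : N (z + bc z - v) = d := by linarith [sub_eq_zero.mp h]
    exact this
  · refine ⟨z, z - bc z, hzd, hbz.2, ?_, ?_⟩
    · have e : z - (z - bc z) = bc z := by module
      rw [e, hbzn]
    · have e : z + (z - bc z) - v = z + z - bc z - v := by module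
      rw [e]
      linarith [sub_eq_zero.mp h]

end Spindle

section SEP

variable {N : ℝ × ℝ → ℝ} (hN : IsNorm N) (hU : IsURTC N) {d : ℝ} (hd : 0 < d)
  {φ : ℝ × ℝ → ℝ × ℝ} (hφ : ∀ x y : ℝ × ℝ, N (x - y) = d → N (φ x - φ y) = d)
include hN hU hd hφ

/-- `φ` never identifies the two intersection points of circles of radius `d`
whose centers are at distance `d`. -/
lemma sep {a b x : ℝ × ℝ} (hab : N (a - b) = d)
    (hx1 : N (a - x) = d) (hx2 : N (b - x) = d) :
    φ x ≠ φ (a + b - x) := by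
  intro hcol
  -- rhombus at base x
  obtain ⟨α', β', hα', hβ', hαβ', hdiag⟩ :=
    spindle hN hU hd (α := a - x) (β := b - x) hx1 hx2
      (by have e : a - x - (b - x) = a - b := by module
          rw [e]; exact hab)
  set a' := x + α' with ha'
  set b' := x + β' with hb'
  set R := x + α' + β' with hR
  -- domain distances
  have hd1 : N (a' - b') = d := by
    have e : a' - b' = α' - β' := by rw [ha', hb']; module
    rw [e]; exact hαβ'
  have hd2 : N (a' - x) = d := by
    have e : a' - x = α' := by rw [ha']; module
    rw [e]; exact hα'
  have hd3 : N (b' - x) = d := by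
    have e : b' - x = β' := by rw [hb']; module
    rw [e]; exact hβ'
  have hd4 : N (a' - R) = d := by
    have e : a' - R = -β' := by rw [ha', hR]; module
    rw [e, N_neg hN]; exact hβ'
  have hd5 : N (b' - R) = d := by
    have e : b' - R = -α' := by rw [hb', hR]; module
    rw [e, N_neg hN]; exact hα'
  have hd6 : N (R - (a + b - x)) = d := by
    have e : R - (a + b - x) = α' + β' - (a - x + (b - x)) := by rw [hR]; module
    rw [e]; exact hdiag
  -- image distances
  have hiab : N (φ a' - φ b') = d := hφ _ _ hd1
  have hiax : N (φ a' - φ x) = d := hφ _ _ hd2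
  have hibx : N (φ b' - φ x) = d := hφ _ _ hd3
  have hiaR : N (φ a' - φ R) = d := hφ _ _ hd4
  have hibR : N (φ b' - φ R) = d := hφ _ _ hd5
  have hiRs : N (φ R - φ (a + b - x)) = d := hφ _ _ hd6
  -- φ R ≠ φ x  since φ (a+b-x) = φ x
  have hR_ne : φ R ≠ φ x := by
    intro h
    rw [h, ← hcol] at hiRs
    rw [sub_self, N_zero hN] at hiRs
    exact (ne_of_gt hd) hiRs.symm
  -- pair structure in the image
  have := pair_struct hN hU hd (a := φ a') (b := φ b') hiab hiax hibx hiaR hibR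
  rcases this with h | h
  · exact hR_ne h
  · -- φ R is the reflection of φ x; but it is also at distance d from φ x
    have hno := no_d_pair hN hU hd (a := φ a') (b := φ b') hiab hiax hibx
    apply hno
    rw [← h]
    rw [← hcol] at hiRs
    exact hiRs

end SEP

/-- For a URTC-norm, a map preserving distance `d` preserves the reflection
`b₀ ↦ 2 b₂ - b₀` for any `b₀, b₂` at distance `d`. -/
theorem preserves_point_reflection (N : ℝ × ℝ → ℝ) (hN : IsNorm N) (hU : IsURTC N)
    (d : ℝ) (hd : 0 < d) (φ : ℝ × ℝ → ℝ × ℝ)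
    (hφ : ∀ x y : ℝ × ℝ, N (x - y) = d → N (φ x - φ y) = d)
    (b₀ b₂ : ℝ × ℝ) (h02 : N (b₀ - b₂) = d) :
    φ ((2 : ℝ) • b₂ - b₀) = (2 : ℝ) • φ b₂ - φ b₀ := by
  obtain ⟨p, hp1, hp2⟩ := pair_nonempty hN hU hd b₀ b₂ h02
  set P₂ : ℝ × ℝ := p + b₂ - b₀ with hP₂def
  set P₃ : ℝ × ℝ := (2 : ℝ) • b₂ - b₀ with hP₃def
  -- basic distances
  have hpb2 : N (p - b₂) = d := by rw [N_sub_rev hN]; exact hp2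
  have h1 : N (p - b₀) = d := by rw [N_sub_rev hN]; exact hp1
  have h2 : N (b₂ - b₀) = d := by rw [N_sub_rev hN]; exact h02
  have h3 : N (p - P₂) = d := by
    have e : p - P₂ = b₀ - b₂ := by rw [hP₂def]; module
    rw [e]; exact h02
  have h4 : N (b₂ - P₂) = d := by
    have e : b₂ - P₂ = b₀ - p := by rw [hP₂def]; module
    rw [e]; exact hp1
  -- Step 1 : φ P₂ = φ p + φ b₂ - φ b₀
  have hstep1 : φ P₂ = φ p + φ b₂ - φ b₀ := by
    have hpair := pair_struct hN hU hd (a := φ p) (b := φ b₂)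
      (hφ _ _ hpb2) (hφ _ _ h1) (hφ _ _ h2) (hφ _ _ h3) (hφ _ _ h4)
    rcases hpair with h | h
    · exfalso
      have hsep := sep hN hU hd hφ (a := p) (b := b₂) (x := b₀) hpb2 h1 h2
      have e : p + b₂ - b₀ = P₂ := by rw [hP₂def]
      rw [e] at hsep
      exact hsep h.symm
    · exact h
  -- Step 2 : φ P₃ = φ b₂ + φ P₂ - φ p
  have h5 : N (b₂ - p) = d := hp2
  have h6 : N (P₂ - p) = d := by
    have e : P₂ - p = b₂ - b₀ := by rw [hP₂def]; module
    rw [e]; exact h2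
  have h7 : N (b₂ - P₃) = d := by
    have e : b₂ - P₃ = b₀ - b₂ := by rw [hP₃def]; module
    rw [e]; exact h02
  have h8 : N (P₂ - P₃) = d := by
    have e : P₂ - P₃ = p - b₂ := by rw [hP₂def, hP₃def]; module
    rw [e]; exact hpb2
  have hstep2 : φ P₃ = φ b₂ + φ P₂ - φ p := by
    have hpair := pair_struct hN hU hd (a := φ b₂) (b := φ P₂)
      (hφ _ _ h4) (hφ _ _ h5) (hφ _ _ h6) (hφ _ _ h7) (hφ _ _ h8)
    rcases hpair with h | h
    · exfalso
      have hsep := sep hN hU hd hφ (a := b₂) (b := P₂) (x := p) h4 h5 h6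
      have e : b₂ + P₂ - p = P₃ := by rw [hP₂def, hP₃def]; module
      rw [e] at hsep
      exact hsep h.symm
    · exact h
  rw [hstep2, hstep1]
  module
end

section
/- Let ‖·‖ be a URTC-norm on ℝ², let d > 0, and let φ : ℝ² → ℝ² be a map that preserves distance d. Then for every positive integer n, φ preserves distance n·d (i.e., ‖x − y‖ = n·d implies ‖φ(x) − φ(y)‖ = n·d); moreover, whenever a, b, c ∈ ℝ² satisfy ‖a − b‖ = d, ‖b − c‖ = (n − 1)d and ‖a − c‖ = n·d, the images satisfy ‖φ(a) − φ(b)‖ = d, ‖φ(b) − φ(c)‖ = (n − 1)d and ‖φ(a) − φ(c)‖ = n·d. -/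
namespace URTCaux

variable {N : ℝ × ℝ → ℝ} {d : ℝ}

lemma norm_zero' (hN : IsNorm N) : N 0 = 0 := by
  have := hN.smul_eq 0 0; simpa using this

lemma norm_neg' (hN : IsNorm N) (x : ℝ × ℝ) : N (-x) = N x := by
  have := hN.smul_eq (-1) x; simpa using this

lemma norm_nonneg' (hN : IsNorm N) (x : ℝ × ℝ) : 0 ≤ N x := by
  have h := hN.add_le x (-x)
  rw [add_neg_cancel, norm_zero' hN, norm_neg' hN] at h
  linarith

lemma norm_sub_comm' (hN : IsNorm N) (x y : ℝ × ℝ) : N (x - y) = N (y - x) := by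
  rw [← norm_neg' hN (x - y), neg_sub]

lemma norm_pos' (hN : IsNorm N) {x : ℝ × ℝ} (hx : x ≠ 0) : 0 < N x :=
  lt_of_le_of_ne (norm_nonneg' hN x) (fun h => hx (hN.eq_zero_of x h.symm))

lemma norm_ne_zero' (hN : IsNorm N) {x : ℝ × ℝ} (hx : x ≠ 0) : N x ≠ 0 :=
  (norm_pos' hN hx).ne'

lemma norm_two_smul (hN : IsNorm N) (x : ℝ × ℝ) : N (x + x) = 2 * N x := by
  have := hN.smul_eq 2 x
  rw [two_smul] at this
  simpa using this

/-- the circle-pair intersection set at scale `d`. -/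
def Sd (N : ℝ × ℝ → ℝ) (d : ℝ) (a b : ℝ × ℝ) : Set (ℝ × ℝ) :=
  {x | N (a - x) = d ∧ N (b - x) = d}

lemma Sd_encard (hN : IsNorm N) (hU : IsURTC N) (hd : 0 < d) {a b : ℝ × ℝ}
    (hab : N (a - b) = d) : (Sd N d a b).encard = 2 := by
  have hdne : d ≠ 0 := hd.ne'
  have h1 : N (d⁻¹ • a - d⁻¹ • b) = 1 := by
    rw [← smul_sub, hN.smul_eq, hab, abs_of_pos (inv_pos.mpr hd)]
    field_simp
  have himg : Sd N d a b = (fun x => d • x) '' {x : ℝ × ℝ |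
      N (d⁻¹ • a - x) = 1 ∧ N (d⁻¹ • b - x) = 1} := by
    ext x
    constructor
    · rintro ⟨h₁, h₂⟩
      refine ⟨d⁻¹ • x, ⟨?_, ?_⟩, by simp [smul_smul, hdne]⟩
      · rw [← smul_sub, hN.smul_eq, h₁, abs_of_pos (inv_pos.mpr hd)]; field_simp
      · rw [← smul_sub, hN.smul_eq, h₂, abs_of_pos (inv_pos.mpr hd)]; field_simp
    · rintro ⟨w, ⟨h₁, h₂⟩, rfl⟩
      constructor
      · have : a - d • w = d • (d⁻¹ • a - w) := by
          rw [smul_sub, smul_smul]; field_simp; rw [one_smul]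
        rw [this, hN.smul_eq, h₁, abs_of_pos hd, mul_one]
      · have : b - d • w = d • (d⁻¹ • b - w) := by
          rw [smul_sub, smul_smul]; field_simp; rw [one_smul]
        rw [this, hN.smul_eq, h₂, abs_of_pos hd, mul_one]
  rw [himg, Function.Injective.encard_image (smul_right_injective _ hdne)]
  exact hU _ _ h1

/-- two mates, distinct, spanning the set, with the parallelogram sum rule. -/
lemma mates_pair (hN : IsNorm N) (hU : IsURTC N) (hd : 0 < d) {a b : ℝ × ℝ}
    (hab : N (a - b) = d) :
    ∃ p q : ℝ × ℝ, p ≠ q ∧ Sd N d a b = {p, q} ∧ p + q = a + b := by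
  obtain ⟨p, q, hpq, hS⟩ := Set.encard_eq_two.mp (Sd_encard hN hU hd hab)
  refine ⟨p, q, hpq, hS, ?_⟩
  have hpS : p ∈ Sd N d a b := by rw [hS]; exact Set.mem_insert _ _
  have hσ : a + b - p ∈ Sd N d a b := by
    constructor
    · have : a - (a + b - p) = -(b - p) := by ring
      rw [this, norm_neg' hN]; exact hpS.2
    · have : b - (a + b - p) = -(a - p) := by ring
      rw [this, norm_neg' hN]; exact hpS.1
  rw [hS] at hσ
  rcases hσ with h | h
  · exfalso
    have h2 : (a - p) + (a - p) = a - b := by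
      linear_combination h
    have := norm_two_smul hN (a - p)
    rw [h2, hab, hpS.1] at this
    linarith
  · rw [Set.mem_singleton_iff] at h
    linear_combination -h


lemma mem_Sd_iff {a b x : ℝ × ℝ} :
    x ∈ Sd N d a b ↔ N (a - x) = d ∧ N (b - x) = d := Iff.rfl

/-- any two distinct elements of an `Sd` set sum to `a + b`. -/
lemma sum_of_mem (hN : IsNorm N) (hU : IsURTC N) (hd : 0 < d) {a b r s : ℝ × ℝ}
    (hab : N (a - b) = d) (hr : r ∈ Sd N d a b) (hs : s ∈ Sd N d a b)
    (hrs : r ≠ s) : r + s = a + b := by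
  obtain ⟨p, q, hpq, hS, hsum⟩ := mates_pair hN hU hd hab
  rw [hS] at hr hs
  simp only [Set.mem_insert_iff, Set.mem_singleton_iff] at hr hs
  rcases hr with rfl | rfl <;> rcases hs with rfl | rfl
  · exact absurd rfl hrs
  · exact hsum
  · linear_combination hsum
  · exact absurd rfl hrs

/-- "mate vector": sum of two unit vectors at unit distance from each other. -/
def MV (N : ℝ × ℝ → ℝ) (d : ℝ) (ω : ℝ × ℝ) : Prop :=
  ∃ u v : ℝ × ℝ, N u = d ∧ N v = d ∧ N (u - v) = d ∧ ω = u + v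

lemma mv_ge (hN : IsNorm N) {ω : ℝ × ℝ} (h : MV N d ω) : d ≤ N ω := by
  obtain ⟨u, v, hu, hv, huv, rfl⟩ := h
  have h2 : (u + v) + (u - v) = u + u := by ring
  have := norm_two_smul hN u
  rw [← h2] at this
  have hle := hN.add_le (u + v) (u - v)
  rw [this] at hle  -- no: this : N ((u+v)+(u-v)) = 2 * N u
  linarith [hle, huv, hu]

lemma mv_ne_zero (hN : IsNorm N) (hd : 0 < d) {ω : ℝ × ℝ} (h : MV N d ω) : ω ≠ 0 := by
  intro h0
  have := mv_ge hN h
  rw [h0, norm_zero' hN] at this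
  linarith

/-- no 4-point equilateral sets: a mate vector never has norm `d`. -/
lemma mv_ne_d (hN : IsNorm N) (hU : IsURTC N) (hd : 0 < d) {ω : ℝ × ℝ}
    (h : MV N d ω) : N ω ≠ d := by
  obtain ⟨u, v, hu, hv, huv, rfl⟩ := h
  intro hsum
  have hune : u ≠ 0 := by
    intro h0; rw [h0, norm_zero' hN] at hu; exact hd.ne hu
  have hvne : v ≠ 0 := by
    intro h0; rw [h0, norm_zero' hN] at hv; exact hd.ne hv
  have h0u : N ((0 : ℝ × ℝ) - u) = d := by
    rw [zero_sub, norm_neg' hN]; exact hu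
  have hvmem : v ∈ Sd N d 0 u := by
    constructor
    · rw [zero_sub, norm_neg' hN]; exact hv
    · exact huv
  have hsmem : u + v ∈ Sd N d 0 u := by
    constructor
    · rw [zero_sub, norm_neg' hN]; exact hsum
    · have : u - (u + v) = -v := by ring
      rw [this, norm_neg' hN]; exact hv
  have hne : v ≠ u + v := by
    intro h2
    exact hune (by linear_combination -h2)
  have hs := sum_of_mem hN hU hd h0u hvmem hsmem hne
  have h2 : (2 : ℝ) • v = 0 := by rw [two_smul]; linear_combination hs
  rcases smul_eq_zero.mp h2 with h | h
  · norm_num at h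
  · exact hvne h

/-- the difference of two distinct elements of `Sd a b` is a mate vector. -/
lemma mates_diff_mv (hN : IsNorm N) {a b r s : ℝ × ℝ}
    (hr : r ∈ Sd N d a b) (hs : s ∈ Sd N d a b) (hab : N (a - b) = d)
    (hsum : r + s = a + b) : MV N d (s - r) := by
  refine ⟨a - r, b - r, hr.1, hr.2, ?_, ?_⟩
  · have : a - r - (b - r) = a - b := by ring
    rw [this]; exact hab
  · linear_combination hsum


/-! ### Analytic facts -/

lemma norm_le_const (hN : IsNorm N) (x : ℝ × ℝ) :
    N x ≤ (N (1, 0) + N (0, 1) + 1) * ‖x‖ := by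
  have hx : x = x.1 • ((1 : ℝ), (0 : ℝ)) + x.2 • ((0 : ℝ), (1 : ℝ)) := by
    ext <;> simp
  have h1 := hN.add_le (x.1 • ((1 : ℝ), (0 : ℝ))) (x.2 • ((0 : ℝ), (1 : ℝ)))
  rw [← hx] at h1
  rw [hN.smul_eq, hN.smul_eq] at h1
  have h2 : |x.1| ≤ ‖x‖ := by
    have := norm_fst_le x
    simpa using this
  have h3 : |x.2| ≤ ‖x‖ := by
    have := norm_snd_le x
    simpa using this
  have h4 := norm_nonneg' hN ((1 : ℝ), (0 : ℝ))
  have h5 := norm_nonneg' hN ((0 : ℝ), (1 : ℝ))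
  have h6 := norm_nonneg x
  nlinarith [abs_nonneg x.1, abs_nonneg x.2]

lemma continuous_N (hN : IsNorm N) : Continuous N := by
  rw [Metric.continuous_iff]
  intro b ε hε
  set C : ℝ := N (1, 0) + N (0, 1) + 1 with hC
  have hCpos : 0 < C := by
    have h4 := norm_nonneg' hN ((1 : ℝ), (0 : ℝ))
    have h5 := norm_nonneg' hN ((0 : ℝ), (1 : ℝ))
    simp only [hC]; linarith
  refine ⟨ε / C, by positivity, fun a ha => ?_⟩
  have key : |N a - N b| ≤ C * ‖a - b‖ := by
    have t1 : N a - N b ≤ N (a - b) := by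
      have := hN.add_le (a - b) b; simp only [sub_add_cancel] at this; linarith
    have t2 : N b - N a ≤ N (a - b) := by
      have := hN.add_le (b - a) a; simp only [sub_add_cancel] at this
      rw [norm_sub_comm' hN] at this; linarith
    have t3 := norm_le_const hN (a - b)
    rw [abs_sub_le_iff]
    simp only [hC]
    constructor <;> linarith
  rw [Real.dist_eq]
  calc |N a - N b| ≤ C * ‖a - b‖ := key
    _ = C * dist a b := by rw [dist_eq_norm]
    _ < C * (ε / C) := by
        apply mul_lt_mul_of_pos_left ha hCpos
    _ = ε := by field_simp

lemma exists_lower (hN : IsNorm N) : ∃ c : ℝ, 0 < c ∧ ∀ x, c * ‖x‖ ≤ N x := by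
  have hcomp := isCompact_sphere (0 : ℝ × ℝ) 1
  have hne : (Metric.sphere (0 : ℝ × ℝ) 1).Nonempty := by
    refine ⟨((1 : ℝ), (0 : ℝ)), ?_⟩
    simp [Prod.norm_def]
  obtain ⟨z, hzmem, hzmin⟩ := hcomp.exists_isMinOn hne (continuous_N hN).continuousOn
  have hz1 : ‖z‖ = 1 := by simpa using hzmem
  have hzne : z ≠ 0 := by
    intro h; rw [h] at hz1; simp at hz1
  refine ⟨N z, norm_pos' hN hzne, fun x => ?_⟩
  by_cases hx : x = 0
  · subst hx; simp [norm_zero' hN]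
  · have hnx : (0 : ℝ) < ‖x‖ := norm_pos_iff.mpr hx
    have humem : ‖x‖⁻¹ • x ∈ Metric.sphere (0 : ℝ × ℝ) 1 := by
      simp [norm_smul, abs_of_pos (inv_pos.mpr hnx), inv_mul_cancel₀ hnx.ne']
    have hle := hzmin humem
    have heq : N x = ‖x‖ * N (‖x‖⁻¹ • x) := by
      rw [hN.smul_eq, abs_of_pos (inv_pos.mpr hnx)]
      field_simp
    rw [heq]
    have : N z ≤ N (‖x‖⁻¹ • x) := hle
    nlinarith

lemma isCompact_Cd (hN : IsNorm N) (d : ℝ) : IsCompact {u : ℝ × ℝ | N u = d} := by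
  obtain ⟨c, hc, hcl⟩ := exists_lower hN
  apply Metric.isCompact_of_isClosed_isBounded
  · exact isClosed_eq (continuous_N hN) continuous_const
  · rw [Metric.isBounded_iff_subset_closedBall 0]
    refine ⟨d / c, fun u hu => ?_⟩
    simp only [Set.mem_setOf_eq] at hu
    simp only [Metric.mem_closedBall, dist_zero_right]
    rw [le_div_iff₀ hc]
    have := hcl u
    rw [hu] at this
    linarith

/-- planar determinant -/
def Det (u v : ℝ × ℝ) : ℝ := u.1 * v.2 - u.2 * v.1

lemma det_eq_zero_imp {u v : ℝ × ℝ} (hu : u ≠ 0) (h : Det u v = 0) :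
    ∃ k : ℝ, v = k • u := by
  have h' : u.1 * v.2 - u.2 * v.1 = 0 := h
  by_cases h1 : u.1 ≠ 0
  · refine ⟨v.1 / u.1, ?_⟩
    have hv2 : v.2 = u.2 * v.1 / u.1 := by field_simp; linarith
    ext
    · simp [Prod.smul_fst]; field_simp
    · simp [Prod.smul_snd]; rw [hv2]; ring
  · push_neg at h1
    have h2 : u.2 ≠ 0 := by
      intro h2; exact hu (Prod.ext h1 h2)
    refine ⟨v.2 / u.2, ?_⟩
    have hv1 : v.1 = 0 := by
      rw [h1] at h'; simp at h'
      rcases h' with h' | h'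
      · exact absurd h' h2
      · exact h'
    ext
    · simp [Prod.smul_fst, hv1, h1]
    · simp [Prod.smul_snd]; field_simp
  
lemma det_off (hN : IsNorm N) (hd : 0 < d) {u v : ℝ × ℝ}
    (hu : N u = d) (hv : N v = d) (huv : N (u - v) = d) : Det u v ≠ 0 := by
  intro h0
  have hune : u ≠ 0 := by
    intro h; rw [h, norm_zero' hN] at hu; exact hd.ne hu
  obtain ⟨k, rfl⟩ := det_eq_zero_imp hune h0
  rw [hN.smul_eq, hu] at hv
  have hk : |k| = 1 := by
    field_simp at hv
    tauto
  rcases abs_eq (by norm_num : (0:ℝ) ≤ 1) |>.mp hk with rfl | rfl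
  · rw [one_smul, sub_self, norm_zero' hN] at huv
    exact hd.ne' huv.symm  
  · have : u - (-1 : ℝ) • u = u + u := by
      rw [neg_one_smul]; ring
    rw [this, norm_two_smul hN, hu] at huv
    linarith


/-! ### The mate function -/

lemma det_u_sub (u p : ℝ × ℝ) : Det u (u - p) = -Det u p := by
  simp only [Det, Prod.fst_sub, Prod.snd_sub]; ring

lemma det_neg_neg (u v : ℝ × ℝ) : Det (-u) (-v) = Det u v := by
  simp only [Det, Prod.fst_neg, Prod.snd_neg]; ring

open Classical in
noncomputable def mate (N : ℝ × ℝ → ℝ) (d : ℝ) (u : ℝ × ℝ) : ℝ × ℝ :=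
  if h : ∃ v, N v = d ∧ N (u - v) = d ∧ 0 < Det u v then h.choose else 0

lemma mate_exists (hN : IsNorm N) (hU : IsURTC N) (hd : 0 < d) {u : ℝ × ℝ}
    (hu : N u = d) : ∃ v, N v = d ∧ N (u - v) = d ∧ 0 < Det u v := by
  have h0u : N ((0 : ℝ × ℝ) - u) = d := by rw [zero_sub, norm_neg' hN]; exact hu
  obtain ⟨p, q, hpq, hS, hsum⟩ := mates_pair hN hU hd h0u
  have hpmem : p ∈ Sd N d 0 u := by rw [hS]; exact Set.mem_insert _ _
  have hqmem : q ∈ Sd N d 0 u := by rw [hS]; exact Set.mem_insert_of_mem _ rfl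
  have hp : N p = d := by
    have := hpmem.1; rwa [zero_sub, norm_neg' hN] at this
  have hq : N q = d := by
    have := hqmem.1; rwa [zero_sub, norm_neg' hN] at this
  have hup : N (u - p) = d := hpmem.2
  have huq : N (u - q) = d := hqmem.2
  have hdetp : Det u p ≠ 0 := det_off hN hd hu hp hup
  have hq' : q = u - p := by linear_combination hsum
  have hdetq : Det u q = -Det u p := by
    rw [hq']; exact det_u_sub u p
  rcases lt_or_gt_of_ne hdetp with h | h
  · exact ⟨q, hq, huq, by rw [hdetq]; linarith⟩
  · exact ⟨p, hp, hup, h⟩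

lemma mate_spec (hN : IsNorm N) (hU : IsURTC N) (hd : 0 < d) {u : ℝ × ℝ}
    (hu : N u = d) :
    N (mate N d u) = d ∧ N (u - mate N d u) = d ∧ 0 < Det u (mate N d u) := by
  have h := mate_exists hN hU hd hu
  rw [mate]
  rw [dif_pos h]
  exact h.choose_spec

lemma mate_unique (hN : IsNorm N) (hU : IsURTC N) (hd : 0 < d) {u v : ℝ × ℝ}
    (hu : N u = d) (h1 : N v = d) (h2 : N (u - v) = d) (h3 : 0 < Det u v) :
    v = mate N d u := by
  have hspec := mate_spec hN hU hd hu
  -- both v and mate lie in Sd N d 0 u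
  have h0u : N ((0 : ℝ × ℝ) - u) = d := by rw [zero_sub, norm_neg' hN]; exact hu
  obtain ⟨p, q, hpq, hS, hsum⟩ := mates_pair hN hU hd h0u
  have hvmem : v ∈ Sd N d 0 u := by
    constructor
    · rw [zero_sub, norm_neg' hN]; exact h1
    · exact h2
  have hmmem : mate N d u ∈ Sd N d 0 u := by
    constructor
    · rw [zero_sub, norm_neg' hN]; exact hspec.1
    · exact hspec.2.1
  rw [hS] at hvmem hmmem
  simp only [Set.mem_insert_iff, Set.mem_singleton_iff] at hvmem hmmem
  have hq' : q = u - p := by linear_combination hsum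
  have hdetq : Det u q = -Det u p := by rw [hq']; exact det_u_sub u p
  have hm3 := hspec.2.2
  rcases hvmem with hv | hv <;> rcases hmmem with hm | hm
  · rw [hv, ← hm]
  · exfalso; rw [hv] at h3; rw [hm, hdetq] at hm3; linarith
  · exfalso; rw [hv, hdetq] at h3; rw [hm] at hm3; linarith
  · rw [hv, ← hm]

lemma mate_neg (hN : IsNorm N) (hU : IsURTC N) (hd : 0 < d) {u : ℝ × ℝ}
    (hu : N u = d) : mate N d (-u) = -mate N d u := by
  have hspec := mate_spec hN hU hd hu
  have hnu : N (-u) = d := by rw [norm_neg' hN]; exact hu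
  refine (mate_unique hN hU hd hnu ?_ ?_ ?_).symm
  · rw [norm_neg' hN]; exact hspec.1
  · have : -u - -mate N d u = -(u - mate N d u) := by ring
    rw [this, norm_neg' hN]; exact hspec.2.1
  · rw [det_neg_neg]; exact hspec.2.2

lemma mate_mem_K (w : ℝ × ℝ) : mate N d w ∈ {u : ℝ × ℝ | N u = d} ∪ {0} := by
  rw [mate]
  split
  next h => exact Or.inl h.choose_spec.1
  next h => exact Or.inr rfl

lemma mate_continuousOn (hN : IsNorm N) (hU : IsURTC N) (hd : 0 < d) :
    ContinuousOn (mate N d) {u : ℝ × ℝ | N u = d} := by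
  intro u hu
  have huCd : N u = d := hu
  have hK : IsCompact ({u : ℝ × ℝ | N u = d} ∪ {0}) :=
    (isCompact_Cd hN d).union isCompact_singleton
  rw [ContinuousWithinAt]
  apply Filter.tendsto_of_subseq_tendsto
  intro ns hns
  have hmem : ∀ᶠ n in Filter.atTop, ns n ∈ {u : ℝ × ℝ | N u = d} :=
    hns self_mem_nhdsWithin
  have hnsu : Filter.Tendsto ns Filter.atTop (nhds u) :=
    hns.mono_right nhdsWithin_le_nhds
  have hvals : ∀ n, mate N d (ns n) ∈ {u : ℝ × ℝ | N u = d} ∪ {0} :=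
    fun n => mate_mem_K _
  obtain ⟨w, hwK, ms, hms, hwt⟩ := hK.tendsto_subseq hvals
  refine ⟨ms, ?_⟩
  have hmem2 : ∀ᶠ n in Filter.atTop, N (ns (ms n)) = d :=
    hms.tendsto_atTop.eventually hmem
  have hxe : Filter.Tendsto (fun n => ns (ms n)) Filter.atTop (nhds u) :=
    hnsu.comp hms.tendsto_atTop
  -- limit facts
  have hNw : N w = d := by
    have h1 : Filter.Tendsto (fun n => N (mate N d (ns (ms n)))) Filter.atTop
        (nhds (N w)) := ((continuous_N hN).tendsto w).comp hwt
    have h2 : ∀ᶠ n in Filter.atTop, N (mate N d (ns (ms n))) = d := by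
      filter_upwards [hmem2] with n hn
      exact (mate_spec hN hU hd hn).1
    have h3 : Filter.Tendsto (fun _ : ℕ => d) Filter.atTop (nhds (N w)) :=
      Filter.Tendsto.congr' h2 h1
    exact tendsto_nhds_unique h3 tendsto_const_nhds
  have hNuw : N (u - w) = d := by
    have h1 : Filter.Tendsto (fun n => N (ns (ms n) - mate N d (ns (ms n))))
        Filter.atTop (nhds (N (u - w))) :=
      ((continuous_N hN).tendsto _).comp (hxe.sub hwt)
    have h2 : ∀ᶠ n in Filter.atTop,
        N (ns (ms n) - mate N d (ns (ms n))) = d := by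
      filter_upwards [hmem2] with n hn
      exact (mate_spec hN hU hd hn).2.1
    have h3 : Filter.Tendsto (fun _ : ℕ => d) Filter.atTop (nhds (N (u - w))) :=
      Filter.Tendsto.congr' h2 h1
    exact tendsto_nhds_unique h3 tendsto_const_nhds
  have hdet : 0 ≤ Det u w := by
    have hdc : Continuous fun p : (ℝ × ℝ) × (ℝ × ℝ) => Det p.1 p.2 := by
      simp only [Det]; fun_prop
    have h1 : Filter.Tendsto (fun n => Det (ns (ms n)) (mate N d (ns (ms n))))
        Filter.atTop (nhds (Det u w)) := by
      have := (hdc.tendsto (u, w)).comp (hxe.prodMk_nhds hwt)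
      exact this
    apply ge_of_tendsto h1
    filter_upwards [hmem2] with n hn
    exact le_of_lt (mate_spec hN hU hd hn).2.2
  have hdetne : Det u w ≠ 0 := det_off hN hd huCd hNw hNuw
  have hfin : w = mate N d u :=
    mate_unique hN hU hd huCd hNw hNuw (lt_of_le_of_ne hdet (Ne.symm hdetne))
  rw [← hfin]
  exact hwt


lemma det_swap (u v : ℝ × ℝ) : Det v u = -Det u v := by
  simp only [Det]; ring

/-- Key analytic lemma: near any mate vector there is another mate vector at
distance exactly `d`. -/
lemma exists_mv_near (hN : IsNorm N) (hU : IsURTC N) (hd : 0 < d) {ω₀ : ℝ × ℝ}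
    (h : MV N d ω₀) : ∃ ω, MV N d ω ∧ N (ω - ω₀) = d := by
  obtain ⟨u', v', hu', hv', huv', rfl⟩ := h
  have hdet := det_off hN hd hu' hv' huv'
  obtain ⟨a₀, b₀, ha, hb, hab, hsum, hdetp⟩ :
      ∃ a₀ b₀ : ℝ × ℝ, N a₀ = d ∧ N b₀ = d ∧ N (a₀ - b₀) = d ∧
        a₀ + b₀ = u' + v' ∧ 0 < Det a₀ b₀ := by
    rcases lt_or_gt_of_ne hdet with hlt | hgt
    · refine ⟨v', u', hv', hu', by rw [norm_sub_comm' hN]; exact huv',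
        by ring, ?_⟩
      rw [det_swap]; linarith
    · exact ⟨u', v', hu', hv', huv', rfl, hgt⟩
  have ha0 : a₀ ≠ 0 := by
    intro h0; rw [h0, norm_zero' hN] at ha; exact hd.ne ha
  set R : ℝ → ℝ × ℝ := fun t =>
    (Real.cos (Real.pi * t) * a₀.1 - Real.sin (Real.pi * t) * a₀.2,
     Real.sin (Real.pi * t) * a₀.1 + Real.cos (Real.pi * t) * a₀.2) with hRdef
  have hR0 : R 0 = a₀ := by simp [hRdef]
  have hR1 : R 1 = -a₀ := by
    ext <;> simp [hRdef, Real.cos_pi, Real.sin_pi]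
  have hRne : ∀ t, R t ≠ 0 := by
    intro t h0
    have hs := Real.sin_sq_add_cos_sq (Real.pi * t)
    have key : (R t).1 ^ 2 + (R t).2 ^ 2 = a₀.1 ^ 2 + a₀.2 ^ 2 := by
      simp only [hRdef]
      linear_combination (a₀.1 ^ 2 + a₀.2 ^ 2) * hs
    rw [h0] at key
    simp only [Prod.fst_zero, Prod.snd_zero] at key
    apply ha0
    have h1 : a₀.1 = 0 := by nlinarith
    have h2 : a₀.2 = 0 := by nlinarith
    exact Prod.ext h1 h2
  have hNR : ∀ t, 0 < N (R t) := fun t => norm_pos' hN (hRne t)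
  set γ : ℝ → ℝ × ℝ := fun t => (d / N (R t)) • R t with hγdef
  have hγmem : ∀ t, N (γ t) = d := by
    intro t
    rw [hγdef]
    simp only
    rw [hN.smul_eq, abs_of_pos (div_pos hd (hNR t))]
    exact div_mul_cancel₀ d (hNR t).ne'
  have hγ0 : γ 0 = a₀ := by
    simp only [hγdef, hR0, ha]
    rw [div_self hd.ne', one_smul]
  have hγ1 : γ 1 = -a₀ := by
    simp only [hγdef, hR1]
    rw [norm_neg' hN, ha, div_self hd.ne', one_smul]
  have hRcont : Continuous R := by
    rw [hRdef]; fun_prop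
  have hγcont : Continuous γ := by
    rw [hγdef]
    exact (continuous_const.div ((continuous_N hN).comp hRcont)
      fun t => (hNR t).ne').smul hRcont
  have hmateγ : Continuous fun t => mate N d (γ t) :=
    (mate_continuousOn hN hU hd).comp_continuous hγcont fun t => hγmem t
  set F : ℝ → ℝ := fun t => N (γ t + mate N d (γ t) - (a₀ + b₀)) with hFdef
  have hFcont : Continuous F := by
    rw [hFdef]
    exact (continuous_N hN).comp ((hγcont.add hmateγ).sub continuous_const)
  have hmateb : mate N d a₀ = b₀ := (mate_unique hN hU hd ha hb hab hdetp).symm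
  have hF0 : F 0 = 0 := by
    rw [hFdef]
    simp only [hγ0, hmateb, sub_self]
    exact norm_zero' hN
  have hF1 : F 1 = 2 * N (a₀ + b₀) := by
    rw [hFdef]
    simp only [hγ1]
    rw [mate_neg hN hU hd ha, hmateb]
    have : -a₀ + -b₀ - (a₀ + b₀) = -((a₀ + b₀) + (a₀ + b₀)) := by ring
    rw [this, norm_neg' hN, norm_two_smul hN]
  have hmv : MV N d (a₀ + b₀) := ⟨a₀, b₀, ha, hb, hab, rfl⟩
  have hdle : d ≤ N (a₀ + b₀) := mv_ge hN hmv
  have hmem : d ∈ Set.Icc (F 0) (F 1) := by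
    rw [hF0, hF1]
    exact ⟨hd.le, by linarith⟩
  obtain ⟨t, _, hFt⟩ := intermediate_value_Icc zero_le_one hFcont.continuousOn hmem
  refine ⟨γ t + mate N d (γ t), ?_, ?_⟩
  · exact ⟨γ t, mate N d (γ t), hγmem t,
      (mate_spec hN hU hd (hγmem t)).1, (mate_spec hN hU hd (hγmem t)).2.1, rfl⟩
  · rw [← hsum]
    exact hFt

/-- `φ` maps an `Sd` set into the corresponding image `Sd` set. -/
lemma phi_mem {φ : ℝ × ℝ → ℝ × ℝ} (hφ : ∀ x y : ℝ × ℝ, N (x - y) = d → N (φ x - φ y) = d)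
    {a b r : ℝ × ℝ} (hr : r ∈ Sd N d a b) : φ r ∈ Sd N d (φ a) (φ b) :=
  ⟨hφ _ _ hr.1, hφ _ _ hr.2⟩

/-- Master non-collapse: `φ` never identifies two points differing by a mate
vector. -/
lemma no_collapse (hN : IsNorm N) (hU : IsURTC N) (hd : 0 < d)
    {φ : ℝ × ℝ → ℝ × ℝ} (hφ : ∀ x y : ℝ × ℝ, N (x - y) = d → N (φ x - φ y) = d)
    {s t : ℝ × ℝ} (hst : MV N d (t - s)) : φ s ≠ φ t := by
  intro heq
  obtain ⟨ω, hωmv, hωd⟩ := exists_mv_near hN hU hd hst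
  set w := s + ω with hw
  obtain ⟨u, v, hu, hv, huv, hsumω⟩ := id hωmv
  -- (s, w) is a mate pair with base (s+u, s+v)
  have hbase : N ((s + u) - (s + v)) = d := by
    have : (s + u) - (s + v) = u - v := by ring
    rw [this]; exact huv
  have hsmem : s ∈ Sd N d (s + u) (s + v) := by
    constructor
    · have : s + u - s = u := by ring
      rw [this]; exact hu
    · have : s + v - s = v := by ring
      rw [this]; exact hv
  have hwmem : w ∈ Sd N d (s + u) (s + v) := by
    constructor
    · have : s + u - w = -v := by rw [hw, hsumω]; ring
      rw [this, norm_neg' hN]; exact hv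
    · have : s + v - w = -u := by rw [hw, hsumω]; ring
      rw [this, norm_neg' hN]; exact hu
  have hsw : s ≠ w := by
    intro h0
    have : ω = 0 := by rw [hw] at h0; linear_combination -h0
    exact mv_ne_zero hN hd hωmv this
  -- distance from w to t is d
  have hwt : N (w - t) = d := by
    have : w - t = ω - (t - s) := by rw [hw]; ring
    rw [this]; exact hωd
  have hwtφ : N (φ w - φ t) = d := hφ _ _ hwt
  -- images are in the image mate set
  have hbaseφ : N (φ (s + u) - φ (s + v)) = d := hφ _ _ hbase
  have hsφ := phi_mem hφ hsmem
  have hwφ := phi_mem hφ hwmem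
  by_cases hcol : φ s = φ w
  · rw [← hcol, ← heq, sub_self, norm_zero' hN] at hwtφ
    exact hd.ne hwtφ
  · have hsum2 := sum_of_mem hN hU hd hbaseφ hsφ hwφ hcol
    have hmv2 : MV N d (φ w - φ s) := mates_diff_mv hN hsφ hwφ hbaseφ hsum2
    have := mv_ne_d hN hU hd hmv2
    rw [heq] at this
    exact this hwtφ


lemma Sd_translate {a b p q t : ℝ × ℝ} (hS : Sd N d a b = {p, q}) :
    Sd N d (a + t) (b + t) = {p + t, q + t} := by
  ext w
  have e1 : a + t - w = a - (w - t) := by ring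
  have e2 : b + t - w = b - (w - t) := by ring
  have key : w ∈ Sd N d (a + t) (b + t) ↔ (w - t) ∈ Sd N d a b := by
    simp only [mem_Sd_iff, e1, e2]
  rw [key, hS]
  simp only [Set.mem_insert_iff, Set.mem_singleton_iff, sub_eq_iff_eq_add]

/-- The key step: `φ` sends three collinear points at consecutive distance `d`
to an arithmetic progression. -/
lemma double_step (hN : IsNorm N) (hU : IsURTC N) (hd : 0 < d)
    {φ : ℝ × ℝ → ℝ × ℝ} (hφ : ∀ x y : ℝ × ℝ, N (x - y) = d → N (φ x - φ y) = d)
    {x y : ℝ × ℝ} (hxy : N (x - y) = d) :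
    φ (y + (y - x)) = φ y + (φ y - φ x) := by
  set z := y + (y - x) with hz
  set e := y - x with he
  obtain ⟨p, q, hpq, hS, hsum⟩ := mates_pair hN hU hd hxy
  have hpmem : p ∈ Sd N d x y := by rw [hS]; exact Set.mem_insert _ _
  have hqmem : q ∈ Sd N d x y := by rw [hS]; exact Set.mem_insert_of_mem _ rfl
  have hxp : N (x - p) = d := hpmem.1
  have hyp : N (y - p) = d := hpmem.2
  have hxq : N (x - q) = d := hqmem.1
  have hyq : N (y - q) = d := hqmem.2
  have hyz : N (y - z) = d := by
    have h0 : y - z = x - y := by rw [hz]; ring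
    rw [h0]; exact hxy
  have hNe : N e = d := by rw [he, norm_sub_comm' hN]; exact hxy
  have hS2 : Sd N d y z = {p + e, q + e} := by
    have h2 := Sd_translate (t := e) hS
    rwa [show x + e = y by rw [he]; ring, show y + e = z by rw [hz, he]] at h2
  have hpemem : p + e ∈ Sd N d y z := by rw [hS2]; exact Set.mem_insert _ _
  have hqemem : q + e ∈ Sd N d y z := by rw [hS2]; exact Set.mem_insert_of_mem _ rfl
  have hsum2 : (p + e) + (q + e) = y + z := by
    rw [hz, he]; linear_combination hsum
  -- distances to translated mates
  have hppe : N (p - (p + e)) = d := by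
    have h0 : p - (p + e) = -e := by ring
    rw [h0, norm_neg' hN]; exact hNe
  have hqqe : N (q - (q + e)) = d := by
    have h0 : q - (q + e) = -e := by ring
    rw [h0, norm_neg' hN]; exact hNe
  -- image notation
  have hAB : N (φ x - φ y) = d := hφ _ _ hxy
  have hBC : N (φ y - φ z) = d := hφ _ _ hyz
  have hUU' : N (φ p - φ (p + e)) = d := hφ _ _ hppe
  have hVV' : N (φ q - φ (q + e)) = d := hφ _ _ hqqe
  -- distinctness of image mates
  have hUV : φ p ≠ φ q :=
    no_collapse hN hU hd hφ (mates_diff_mv hN hpmem hqmem hxy hsum)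
  have hU'V' : φ (p + e) ≠ φ (q + e) :=
    no_collapse hN hU hd hφ (mates_diff_mv hN hpemem hqemem hyz hsum2)
  -- sum rules
  have hsumUV : φ p + φ q = φ x + φ y :=
    sum_of_mem hN hU hd hAB (phi_mem hφ hpmem) (phi_mem hφ hqmem) hUV
  have hsumU'V' : φ (p + e) + φ (q + e) = φ y + φ z :=
    sum_of_mem hN hU hd hBC (phi_mem hφ hpemem) (phi_mem hφ hqemem) hU'V'
  -- U' and A both lie in Sd (φ p) (φ y); likewise V' and A in Sd (φ q) (φ y)
  have hUB : N (φ p - φ y) = d := by rw [norm_sub_comm' hN]; exact hφ _ _ hyp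
  have hVB : N (φ q - φ y) = d := by rw [norm_sub_comm' hN]; exact hφ _ _ hyq
  have hU'memUB : φ (p + e) ∈ Sd N d (φ p) (φ y) := by
    constructor
    · exact hUU'
    · exact hφ _ _ hpemem.1
  have hV'memVB : φ (q + e) ∈ Sd N d (φ q) (φ y) := by
    constructor
    · exact hVV'
    · exact hφ _ _ hqemem.1
  have hAmemUB : φ x ∈ Sd N d (φ p) (φ y) := by
    constructor
    · rw [norm_sub_comm' hN]; exact hφ _ _ hxp
    · rw [norm_sub_comm' hN]; exact hAB
  have hAmemVB : φ x ∈ Sd N d (φ q) (φ y) := by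
    constructor
    · rw [norm_sub_comm' hN]; exact hφ _ _ hxq
    · rw [norm_sub_comm' hN]; exact hAB
  by_cases hU'A : φ (p + e) = φ x
  · -- then φ z = φ q : contradiction
    exfalso
    have hV'A : φ (q + e) ≠ φ x := by
      rw [← hU'A]; exact Ne.symm hU'V'
    have hsumV'A : φ (q + e) + φ x = φ q + φ y :=
      sum_of_mem hN hU hd hVB hV'memVB hAmemVB hV'A
    have hCV : φ z = φ q := by
      linear_combination -hsumU'V' + hsumV'A + hU'A
    have hmvzq : MV N d (z - q) := by
      refine ⟨e, p - x, hNe, by rw [norm_sub_comm' hN]; exact hxp, ?_, ?_⟩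
      · have h0 : e - (p - x) = y - p := by rw [he]; ring
        rw [h0]; exact hyp
      · rw [hz, he]; linear_combination -hsum
    exact no_collapse hN hU hd hφ hmvzq hCV.symm
  · by_cases hV'A : φ (q + e) = φ x
    · -- then φ z = φ p : contradiction
      exfalso
      have hsumU'A : φ (p + e) + φ x = φ p + φ y :=
        sum_of_mem hN hU hd hUB hU'memUB hAmemUB hU'A
      have hCU : φ z = φ p := by
        linear_combination -hsumU'V' + hsumU'A + hV'A
      have hmvzp : MV N d (z - p) := by
        refine ⟨e, y - p, hNe, hyp, ?_, ?_⟩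
        · have h0 : e - (y - p) = p - x := by rw [he]; ring
          rw [h0]; rw [norm_sub_comm' hN]; exact hxp
        · rw [hz, he]; ring
      exact no_collapse hN hU hd hφ hmvzp hCU.symm
    · -- main case
      have hsumU'A : φ (p + e) + φ x = φ p + φ y :=
        sum_of_mem hN hU hd hUB hU'memUB hAmemUB hU'A
      have hsumV'A2 : φ (q + e) + φ x = φ q + φ y :=
        sum_of_mem hN hU hd hVB hV'memVB hAmemVB hV'A
      linear_combination -hsumU'V' + hsumU'A + hsumV'A2 + hsumUV

/-- `φ` preserves every positive multiple of `d`. -/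
lemma preserves_nd (hN : IsNorm N) (hU : IsURTC N) (hd : 0 < d)
    {φ : ℝ × ℝ → ℝ × ℝ} (hφ : ∀ x y : ℝ × ℝ, N (x - y) = d → N (φ x - φ y) = d)
    (n : ℕ) (hn : 0 < n) :
    ∀ x y : ℝ × ℝ, N (x - y) = n * d → N (φ x - φ y) = n * d := by
  intro x y hxy
  have hnR : (0 : ℝ) < (n : ℝ) := Nat.cast_pos.mpr hn
  set e : ℝ × ℝ := ((n : ℝ))⁻¹ • (y - x) with he
  have hNe : N e = d := by
    rw [he, hN.smul_eq, abs_of_pos (inv_pos.mpr hnR), norm_sub_comm' hN, hxy]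
    field_simp
  set g : ℕ → ℝ × ℝ := fun k => x + (k : ℝ) • e with hg
  have hg0 : g 0 = x := by simp [hg]
  have hstep : ∀ k : ℕ, N (g k - g (k + 1)) = d := by
    intro k
    have h0 : g k - g (k + 1) = -e := by
      simp only [hg]
      push_cast
      rw [add_smul, one_smul]
      abel
    rw [h0, norm_neg' hN, hNe]
  have hrec : ∀ k : ℕ, φ (g (k + 1)) = φ (g k) + (φ (g 1) - φ (g 0)) := by
    intro k
    induction k using Nat.strong_induction_on with
    | _ k ih =>
      match k with
      | 0 => ring
      | Nat.succ m =>
        have hds := double_step hN hU hd hφ (hstep m)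
        have harg : g (m + 1) + (g (m + 1) - g m) = g (m + 2) := by
          simp only [hg]
          push_cast
          module
        rw [harg] at hds
        have hm := ih m (by omega)
        rw [hds]
        linear_combination hm
  have hQ : ∀ k : ℕ, φ (g k) = φ x + (k : ℝ) • (φ (g 1) - φ (g 0)) := by
    intro k
    induction k with
    | zero => simp [hg0]
    | succ m ihm =>
      rw [hrec m, ihm]
      push_cast
      rw [add_smul, one_smul]
      abel
  have hgn : g n = y := by
    simp only [hg, he, smul_smul]
    rw [mul_inv_cancel₀ hnR.ne', one_smul]
    ring
  have hw : N (φ (g 1) - φ (g 0)) = d := by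
    rw [norm_sub_comm' hN]
    exact hφ _ _ (hstep 0)
  have hfinal : φ x - φ y = -((n : ℝ) • (φ (g 1) - φ (g 0))) := by
    rw [← hgn, hQ n]; abel
  rw [hfinal, norm_neg' hN, hN.smul_eq, hw, abs_of_pos hnR]

end URTCaux

open URTCaux in
/-- For a URTC-norm, a map preserving distance `d` preserves distance `n * d` for every
positive integer `n`; moreover collinear configurations `d, (n-1)d, nd` are preserved. -/
theorem preserves_multiples (N : ℝ × ℝ → ℝ) (hN : IsNorm N) (hU : IsURTC N)
    (d : ℝ) (hd : 0 < d) (φ : ℝ × ℝ → ℝ × ℝ)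
    (hφ : ∀ x y : ℝ × ℝ, N (x - y) = d → N (φ x - φ y) = d) :
    ∀ n : ℕ, 0 < n →
      (∀ x y : ℝ × ℝ, N (x - y) = n * d → N (φ x - φ y) = n * d) ∧
      (∀ a b c : ℝ × ℝ, N (a - b) = d → N (b - c) = ((n : ℝ) - 1) * d →
        N (a - c) = n * d →
        N (φ a - φ b) = d ∧ N (φ b - φ c) = ((n : ℝ) - 1) * d ∧
          N (φ a - φ c) = n * d) := by
  intro n hn
  refine ⟨preserves_nd hN hU hd hφ n hn, ?_⟩
  intro a b c hab hbc hac
  refine ⟨hφ _ _ hab, ?_, preserves_nd hN hU hd hφ n hn a c hac⟩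
  match n with
  | 1 =>
    have h0 : N (b - c) = 0 := by
      rw [hbc]; norm_num
    have hbc0 : b = c := by
      have := hN.eq_zero_of _ h0
      exact sub_eq_zero.mp this
    rw [hbc0, sub_self, norm_zero' hN]
    norm_num
  | Nat.succ (Nat.succ m) =>
    have hm : (0:ℕ) < m + 1 := Nat.succ_pos m
    have hbc' : N (b - c) = ((m + 1 : ℕ) : ℝ) * d := by
      rw [hbc]; push_cast; ring
    have := preserves_nd hN hU hd hφ (m + 1) hm b c hbc'
    rw [this]; push_cast; ring
end

section
/- Let ‖·‖ be an arbitrary norm on ℝ², and let φ : ℝ² → ℝ² be a map that preserves every positive rational distance, i.e., for every positive rational q and all x, y ∈ ℝ², ‖x − y‖ = q implies ‖φ(x) − φ(y)‖ = q. Then φ is an isometry: ‖φ(x) − φ(y)‖ = ‖x − y‖ for all x, y ∈ ℝ². -/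
section Aux

variable {N : ℝ × ℝ → ℝ}

lemma n_zero (hN : IsNorm N) : N 0 = 0 := by
  have := hN.smul_eq 0 0; simpa using this

lemma n_neg (hN : IsNorm N) (x : ℝ × ℝ) : N (-x) = N x := by
  have := hN.smul_eq (-1) x; simpa using this

lemma n_nonneg (hN : IsNorm N) (x : ℝ × ℝ) : 0 ≤ N x := by
  have h := hN.add_le x (-x)
  rw [add_neg_cancel, n_zero hN, n_neg hN] at h; linarith

lemma n_pos (hN : IsNorm N) {x : ℝ × ℝ} (hx : x ≠ 0) : 0 < N x :=
  (n_nonneg hN x).lt_of_ne fun h => hx (hN.eq_zero_of x h.symm)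

lemma n_sub_le (hN : IsNorm N) (a b : ℝ × ℝ) : N a - N b ≤ N (a - b) := by
  have h := hN.add_le (a - b) b
  simp only [sub_add_cancel] at h; linarith

lemma n_cont (hN : IsNorm N) : Continuous N := by
  have key : ∀ a b : ℝ × ℝ, dist (N a) (N b) ≤ (N (1,0) + N (0,1)) * dist a b := by
    intro a b
    have h1 : N a - N b ≤ N (a - b) := n_sub_le hN a b
    have h2 : N b - N a ≤ N (a - b) := by
      have := n_sub_le hN b a
      rwa [← n_neg hN (b - a), neg_sub] at this
    have h3 : N (a - b) ≤ |a.1 - b.1| * N (1,0) + |a.2 - b.2| * N (0,1) := by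
      have hd : a - b = (a.1 - b.1) • ((1:ℝ),(0:ℝ)) + (a.2 - b.2) • ((0:ℝ),(1:ℝ)) := by
        ext <;> simp
      rw [hd]
      calc N _ ≤ N ((a.1 - b.1) • ((1:ℝ),(0:ℝ))) + N ((a.2 - b.2) • ((0:ℝ),(1:ℝ))) :=
            hN.add_le _ _
        _ = |a.1 - b.1| * N (1,0) + |a.2 - b.2| * N (0,1) := by
            rw [hN.smul_eq, hN.smul_eq]
    have hd1 : |a.1 - b.1| ≤ dist a b := by
      rw [Prod.dist_eq]; simpa [Real.dist_eq] using le_max_left (dist a.1 b.1) (dist a.2 b.2)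
    have hd2 : |a.2 - b.2| ≤ dist a b := by
      rw [Prod.dist_eq]; simpa [Real.dist_eq] using le_max_right (dist a.1 b.1) (dist a.2 b.2)
    have hn1 : 0 ≤ N ((1:ℝ),(0:ℝ)) := n_nonneg hN _
    have hn2 : 0 ≤ N ((0:ℝ),(1:ℝ)) := n_nonneg hN _
    rw [Real.dist_eq, abs_sub_le_iff]
    constructor <;>
      nlinarith [abs_nonneg (a.1-b.1), abs_nonneg (a.2-b.2), dist_nonneg (x := a) (y := b)]
  exact (lipschitzWith_iff_dist_le_mul.mpr (by
    intro a b
    calc dist (N a) (N b) ≤ (N (1,0) + N (0,1)) * dist a b := key a b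
      _ ≤ ((N (1,0) + N (0,1)).toNNReal : ℝ) * dist a b := by
          gcongr
          exact Real.le_coe_toNNReal _)).continuous

lemma circle_meet (hN : IsNorm N) {x y : ℝ × ℝ} (hxy : x ≠ y) {q1 q2 : ℝ}
    (hq1 : 0 < q1) (hlo : |N (x - y) - q1| ≤ q2) (hhi : q2 ≤ N (x - y) + q1) :
    ∃ z : ℝ × ℝ, N (x - z) = q1 ∧ N (y - z) = q2 := by
  set u : ℝ × ℝ := y - x with hu
  have hu0 : u ≠ 0 := sub_ne_zero.mpr (Ne.symm hxy)
  have hd : 0 < N u := n_pos hN hu0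
  set v : ℝ → ℝ × ℝ := fun t => Real.cos (Real.pi * t) • u +
      Real.sin (Real.pi * t) • (-u.2, u.1) with hv
  have hvne : ∀ t, v t ≠ 0 := by
    intro t h
    apply hu0
    have h1 : Real.cos (Real.pi * t) * u.1 + Real.sin (Real.pi * t) * (-u.2) = 0 :=
      congrArg Prod.fst h
    have h2 : Real.cos (Real.pi * t) * u.2 + Real.sin (Real.pi * t) * u.1 = 0 :=
      congrArg Prod.snd h
    have hcs := Real.sin_sq_add_cos_sq (Real.pi * t)
    have e1 : u.1 = 0 := by
      linear_combination Real.cos (Real.pi * t) * h1 + Real.sin (Real.pi * t) * h2 - u.1 * hcs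
    have e2 : u.2 = 0 := by
      linear_combination (- Real.sin (Real.pi * t)) * h1 + Real.cos (Real.pi * t) * h2 - u.2 * hcs
    exact Prod.ext e1 e2
  have hvcont : Continuous v := by fun_prop
  have hNv : Continuous fun t => N (v t) := (n_cont hN).comp hvcont
  have hNvpos : ∀ t, 0 < N (v t) := fun t => n_pos hN (hvne t)
  set z : ℝ → ℝ × ℝ := fun t => x + (q1 / N (v t)) • v t with hz
  have hxz : ∀ t, N (x - z t) = q1 := by
    intro t
    have : x - z t = (-(q1 / N (v t))) • v t := by
      simp [hz, neg_smul]
    rw [this, hN.smul_eq, abs_neg, abs_div, abs_of_pos hq1,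
      abs_of_pos (hNvpos t), div_mul_cancel₀]
    exact (hNvpos t).ne'
  have hg : Continuous fun t => N (y - z t) := by
    apply (n_cont hN).comp
    apply Continuous.sub continuous_const
    exact continuous_const.add ((continuous_const.div hNv fun t => (hNvpos t).ne').smul hvcont)
  have hv0 : v 0 = u := by simp [hv]
  have hv1 : v 1 = -u := by simp [hv]
  have hz0 : z 0 = x + (q1 / N u) • u := by simp only [hz, hv0]
  have hz1 : z 1 = x - (q1 / N u) • u := by
    simp only [hz, hv1, n_neg hN, smul_neg]
    abel
  have hg0 : N (y - z 0) = |N u - q1| := by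
    have hyz : y - z 0 = (1 - q1 / N u) • u := by rw [hz0, hu]; module
    rw [hyz, hN.smul_eq]
    calc |1 - q1 / N u| * N u = |(1 - q1 / N u) * N u| := by
          rw [abs_mul, abs_of_pos hd]
      _ = |N u - q1| := by rw [sub_mul, one_mul, div_mul_cancel₀ _ hd.ne']
  have hg1 : N (y - z 1) = N u + q1 := by
    have hyz : y - z 1 = (1 + q1 / N u) • u := by rw [hz1, hu]; module
    rw [hyz, hN.smul_eq, abs_of_pos (by positivity), add_mul, one_mul,
      div_mul_cancel₀ _ hd.ne']
  have hdu : N (x - y) = N u := by rw [← n_neg hN, hu, neg_sub]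
  have hmem : q2 ∈ Set.Icc (N (y - z 0)) (N (y - z 1)) := by
    rw [hg0, hg1]
    exact ⟨by rwa [hdu] at hlo, by rwa [hdu] at hhi⟩
  obtain ⟨t, _, ht⟩ := intermediate_value_Icc (by norm_num : (0:ℝ) ≤ 1)
    (hg.continuousOn) hmem
  exact ⟨z t, hxz t, ht⟩

end Aux

/-- For any norm on `ℝ²`, a map preserving every positive rational distance is an
isometry. -/
theorem isometry_of_preserves_rational (N : ℝ × ℝ → ℝ) (hN : IsNorm N)
    (φ : ℝ × ℝ → ℝ × ℝ)
    (hφ : ∀ q : ℚ, 0 < q → ∀ x y : ℝ × ℝ, N (x - y) = (q : ℝ) →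
      N (φ x - φ y) = (q : ℝ)) :
    ∀ x y : ℝ × ℝ, N (φ x - φ y) = N (x - y) := by
  intro x y
  by_cases hxy : x = y
  · subst hxy
    simp [n_zero hN]
  · have hd : 0 < N (x - y) := n_pos hN (sub_ne_zero.mpr hxy)
    set d := N (x - y) with hdf
    clear_value d
    apply le_antisymm
    · -- upper bound
      refine le_of_forall_pos_le_add ?_
      intro ε hε
      obtain ⟨q, hq1, hq2⟩ := exists_rat_btwn (show d / 2 < d / 2 + ε / 2 by linarith)
      have hq0 : (0:ℝ) < (q:ℝ) := by linarith
      obtain ⟨z, hz1, hz2⟩ := circle_meet hN hxy hq0 (q2 := (q:ℝ))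
        (abs_le.mpr ⟨by rw [← hdf]; linarith, by rw [← hdf]; linarith⟩)
        (by rw [← hdf]; linarith)
      have h1 := hφ q (by exact_mod_cast hq0) x z hz1
      have h2 := hφ q (by exact_mod_cast hq0) y z hz2
      have hsplit : φ x - φ y = (φ x - φ z) + -(φ y - φ z) := by abel
      calc N (φ x - φ y) ≤ N (φ x - φ z) + N (-(φ y - φ z)) := by
            rw [hsplit]; exact hN.add_le _ _
        _ = (q:ℝ) + (q:ℝ) := by rw [h1, n_neg hN, h2]
        _ ≤ d + ε := by linarith
    · -- lower bound
      refine le_of_forall_pos_le_add ?_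
      intro ε hε
      have hm : 0 < min (min ε d) 2 := lt_min (lt_min hε hd) (by norm_num)
      have hm1 : min (min ε d) 2 ≤ ε := le_trans (min_le_left _ _) (min_le_left _ _)
      have hm2 : min (min ε d) 2 ≤ d := le_trans (min_le_left _ _) (min_le_right _ _)
      have hm3 : min (min ε d) 2 ≤ 2 := min_le_right _ _
      obtain ⟨q, hq1, hq2⟩ :=
        exists_rat_btwn (show d + 1 - min (min ε d) 2 / 2 < d + 1 by linarith)
      have hqge1 : (1:ℝ) ≤ (q:ℝ) := by linarith
      have hq0 : (0:ℝ) < (q:ℝ) := by linarith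
      obtain ⟨z, hz1, hz2⟩ := circle_meet hN hxy hq0 (q2 := (1:ℝ))
        (abs_le.mpr ⟨by rw [← hdf]; linarith, by rw [← hdf]; linarith⟩)
        (by rw [← hdf]; linarith)
      have h1 := hφ q (by exact_mod_cast hq0) x z hz1
      have h2 := hφ 1 one_pos y z (by push_cast; exact hz2)
      rw [Rat.cast_one] at h2
      have hsplit : φ x - φ z = (φ x - φ y) + (φ y - φ z) := by abel
      have htri : N (φ x - φ z) ≤ N (φ x - φ y) + N (φ y - φ z) := by
        rw [hsplit]; exact hN.add_le _ _
      rw [h1, h2] at htri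
      linarith
end
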